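/- arXiv:2509.04774 — 8 statements merged into one kernel-verified Lean document; each statement's English description precedes it below -/
import Mathlib

section
/- Let (G_ω, v) be an increasing weighted tree. Then there is no simple path v_1 → v_2 → ⋯ → v_{k−1} → v_k in G with k ≥ 4 such that ω(v_1 v_2) > ω(v_2 v_3) and ω(v_{k−2} v_{k−1}) < ω(v_{k−1} v_k). -/
open SimpleGraph

noncomputable section

variable {V : Type*}

/-- `p 0, p 1, …, p k` is a simple path in `G`: the vertices are pairwise distinct and
consecutive vertices are adjacent. -/
def IsSimplePathOn (G : SimpleGraph V) (p : ℕ → V) (k : ℕ) : Prop :=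
  (∀ i ≤ k, ∀ j ≤ k, p i = p j → i = j) ∧ ∀ i < k, G.Adj (p i) (p (i + 1))

/-- The path `p 0, …, p k` is increasing for the weight `ω`. -/
def IsIncreasingPath (ω : V → V → ℕ) (p : ℕ → V) (k : ℕ) : Prop :=
  ∀ i, i + 2 ≤ k → ω (p i) (p (i + 1)) ≤ ω (p (i + 1)) (p (i + 2))

/-- A leaf is a vertex of degree one. -/
def IsLeafVertex (G : SimpleGraph V) (x : V) : Prop := ∃! y, G.Adj x y

/-- `(G_ω, v)` is an increasing weighted tree with root `v`: `G` is a tree and every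
simple path from a leaf to `v` is increasing. -/
def IsIncreasingWeightedTree (G : SimpleGraph V) (ω : V → V → ℕ) (v : V) : Prop :=
  G.IsTree ∧ ∀ (p : ℕ → V) (k : ℕ), IsSimplePathOn G p k → IsLeafVertex G (p 0) → p k = v →
    IsIncreasingPath ω p k

/-! ### Auxiliary material -/

/-- Build a walk from a function with adjacent consecutive values. -/
def walkOfFn (G : SimpleGraph V) (q : ℕ → V) :
    (k : ℕ) → (∀ i < k, G.Adj (q i) (q (i + 1))) → G.Walk (q 0) (q k)
  | 0, _ => SimpleGraph.Walk.nil
  | (k + 1), h => (walkOfFn G q k fun i hi => h i (by omega)).concat (h k (by omega))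

lemma walkOfFn_length (G : SimpleGraph V) (q : ℕ → V) (k : ℕ)
    (h : ∀ i < k, G.Adj (q i) (q (i + 1))) : (walkOfFn G q k h).length = k := by
  induction k with
  | zero => rfl
  | succ k ih => rw [walkOfFn, SimpleGraph.Walk.length_concat, ih]

lemma walkOfFn_support (G : SimpleGraph V) (q : ℕ → V) (k : ℕ)
    (h : ∀ i < k, G.Adj (q i) (q (i + 1))) :
    (walkOfFn G q k h).support = (List.range (k + 1)).map q := by
  induction k with
  | zero => simp [walkOfFn, List.range_succ]
  | succ k ih =>
      rw [walkOfFn, SimpleGraph.Walk.support_concat, ih, List.range_succ (n := k + 1)]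
      simp

lemma walkOfFn_isPath (G : SimpleGraph V) (q : ℕ → V) (k : ℕ)
    (h : ∀ i < k, G.Adj (q i) (q (i + 1)))
    (hinj : ∀ i ≤ k, ∀ j ≤ k, q i = q j → i = j) : (walkOfFn G q k h).IsPath := by
  rw [SimpleGraph.Walk.isPath_def, walkOfFn_support]
  refine List.Nodup.map_on ?_ List.nodup_range
  intro a ha b hb hab
  exact hinj a (by simpa using Nat.lt_succ_iff.mp (List.mem_range.mp ha)) b
    (by simpa using Nat.lt_succ_iff.mp (List.mem_range.mp hb)) hab

lemma dist_le_of_fn (G : SimpleGraph V) (q : ℕ → V) (k : ℕ)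
    (h : ∀ i < k, G.Adj (q i) (q (i + 1))) : G.dist (q 0) (q k) ≤ k := by
  have := SimpleGraph.dist_le (walkOfFn G q k h)
  rwa [walkOfFn_length] at this

lemma simplePath_lt_card [Fintype V] {G : SimpleGraph V} {q : ℕ → V} {k : ℕ}
    (hq : IsSimplePathOn G q k) : k < Fintype.card V := by
  have hinj : Function.Injective (fun i : Fin (k + 1) => q i) := by
    intro a b hab
    exact Fin.ext (hq.1 a (by omega) b (by omega) hab)
  have := Fintype.card_le_of_injective _ hinj
  simpa using this

/-- In an acyclic graph, a neighbour of `q 0` cannot equal `q i` for `2 ≤ i` on a simple path. -/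
lemma no_chord {G : SimpleGraph V} (hA : G.IsAcyclic) {q : ℕ → V} {k : ℕ}
    (hq : IsSimplePathOn G q k) {u : V} (hu : G.Adj (q 0) u) {i : ℕ} (h2 : 2 ≤ i)
    (hik : i ≤ k) : u ≠ q i := by
  intro heq
  subst heq
  have hadj : ∀ l < i, G.Adj (q l) (q (l + 1)) := fun l hl => hq.2 l (by omega)
  have hpathA : (walkOfFn G q i hadj).IsPath :=
    walkOfFn_isPath G q i hadj (fun a ha b hb hab => hq.1 a (by omega) b (by omega) hab)
  have heqp : (⟨walkOfFn G q i hadj, hpathA⟩ : G.Path (q 0) (q i)) =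
      SimpleGraph.Path.singleton hu := hA.path_unique _ _
  have hlen := congrArg (fun P : G.Path (q 0) (q i) => (P : G.Walk (q 0) (q i)).length) heqp
  simp only [walkOfFn_length, SimpleGraph.Path.singleton, SimpleGraph.Walk.length_cons,
    SimpleGraph.Walk.length_nil] at hlen
  omega

/-- Every simple path ending at the root of an increasing weighted tree is increasing. -/
lemma increasing_of_path_to_root [Fintype V] {G : SimpleGraph V} {ω : V → V → ℕ} {v : V}
    (hG : IsIncreasingWeightedTree G ω v) :
    ∀ (n k : ℕ) (q : ℕ → V), Fintype.card V ≤ k + n → IsSimplePathOn G q k → q k = v →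
      IsIncreasingPath ω q k := by
  intro n
  induction n with
  | zero =>
      intro k q hcard hq _
      exact absurd (simplePath_lt_card hq) (by omega)
  | succ n ih =>
      intro k q hcard hq hv
      by_cases hleaf : IsLeafVertex G (q 0)
      · exact hG.2 q k hq hleaf hv
      rcases Nat.eq_zero_or_pos k with hk | hk
      · intro i hi; omega
      have hadj01 : G.Adj (q 0) (q 1) := hq.2 0 hk
      have hu : ∃ u, G.Adj (q 0) u ∧ u ≠ q 1 := by
        by_contra h
        push_neg at h
        exact hleaf ⟨q 1, hadj01, fun z hz => h z hz⟩
      obtain ⟨u, hu, hu1⟩ := hu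
      set q' : ℕ → V := fun i => if i = 0 then u else q (i - 1) with hq'def
      have hune : ∀ l ≤ k, u ≠ q l := by
        intro l hl
        rcases Nat.lt_or_ge l 2 with hl2 | hl2
        · interval_cases l
          · exact fun h => G.irrefl (h ▸ hu)
          · exact hu1
        · exact no_chord hG.1.IsAcyclic hq hu hl2 hl
      have hq' : IsSimplePathOn G q' (k + 1) := by
        constructor
        · intro i hi j hj heq
          simp only [hq'def] at heq
          by_cases hi0 : i = 0 <;> by_cases hj0 : j = 0 <;> simp [hi0, hj0] at heq ⊢
          · exact absurd heq (hune (j - 1) (by omega))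
          · exact absurd heq.symm (hune (i - 1) (by omega))
          · have := hq.1 (i - 1) (by omega) (j - 1) (by omega) heq
            omega
        · intro i hi
          rcases Nat.eq_zero_or_pos i with hi0 | hi0
          · subst hi0
            simpa [hq'def] using hu.symm
          · have : G.Adj (q (i - 1)) (q (i - 1 + 1)) := hq.2 (i - 1) (by omega)
            rw [show i - 1 + 1 = i from by omega] at this
            simpa [hq'def, Nat.pos_iff_ne_zero.mp hi0] using this
      have hv' : q' (k + 1) = v := by simpa [hq'def] using hv
      have hinc' := ih (k + 1) q' (by omega) hq' hv'
      intro i hi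
      have := hinc' (i + 1) (by omega)
      simpa [hq'def] using this

/-- Glue a simple path with a disjoint continuation. -/
lemma glue_simple {G : SimpleGraph V} (q : ℕ → V) (k : ℕ) (t : ℕ → V) (d : ℕ)
    (hq : IsSimplePathOn G q k) (ht0 : t 0 = q k)
    (htadj : ∀ s < d, G.Adj (t s) (t (s + 1)))
    (htinj : ∀ a ≤ d, ∀ b ≤ d, t a = t b → a = b)
    (hdisj : ∀ s, 1 ≤ s → s ≤ d → ∀ i ≤ k, t s ≠ q i) :
    IsSimplePathOn G (fun i => if i ≤ k then q i else t (i - k)) (k + d) := by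
  constructor
  · intro i hi j hj heq
    simp only at heq
    by_cases hik : i ≤ k <;> by_cases hjk : j ≤ k <;> simp [hik, hjk] at heq
    · exact hq.1 i hik j hjk heq
    · exact absurd heq.symm (hdisj (j - k) (by omega) (by omega) i hik)
    · exact absurd heq (hdisj (i - k) (by omega) (by omega) j hjk)
    · have := htinj (i - k) (by omega) (j - k) (by omega) heq
      omega
  · intro i hi
    by_cases hik : i + 1 ≤ k
    · simpa [show i ≤ k from by omega, hik] using hq.2 i (by omega)
    · by_cases hik' : i ≤ k
      · have hieq : i = k := by omega
        subst hieq
        have := htadj 0 (by omega)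
        rw [ht0] at this
        simpa [hik] using this
      · have := htadj (i - k) (by omega)
        rw [show i - k + 1 = i + 1 - k from by omega] at this
        simpa [hik', hik] using this

lemma glue_end {V : Type*} (q : ℕ → V) (k : ℕ) (t : ℕ → V) (d : ℕ) (ht0 : t 0 = q k) :
    (fun i => if i ≤ k then q i else t (i - k)) (k + d) = t d := by
  rcases Nat.eq_zero_or_pos d with hd | hd
  · subst hd; simpa using ht0.symm
  · simp [show ¬ (k + d ≤ k) from by omega, show k + d - k = d from by omega]

/-- Lemma 1.3(2): in an increasing weighted tree `(G_ω, v)` there is no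
simple path `v_1 → ⋯ → v_k` with `k ≥ 4` vertices (i.e. `m = k - 1 ≥ 3` edges) such that
`ω(v_1 v_2) > ω(v_2 v_3)` and `ω(v_{k-2} v_{k-1}) < ω(v_{k-1} v_k)`. -/
theorem no_decrease_then_increase_path {V : Type*} [Fintype V]
    (G : SimpleGraph V) (ω : V → V → ℕ)
    (hsym : ∀ a b, ω a b = ω b a) (hpos : ∀ a b, G.Adj a b → 0 < ω a b)
    (v : V) (hG : IsIncreasingWeightedTree G ω v) :
    ¬ ∃ (p : ℕ → V) (m : ℕ), 3 ≤ m ∧ IsSimplePathOn G p m ∧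
      ω (p 1) (p 2) < ω (p 0) (p 1) ∧
      ω (p (m - 2)) (p (m - 1)) < ω (p (m - 1)) (p m) := by
  rintro ⟨p, m, hm, hp, hdec, hinc⟩
  have hconn := hG.1.isConnected
  have key : ∀ (k : ℕ) (q : ℕ → V), IsSimplePathOn G q k → q k = v → IsIncreasingPath ω q k :=
    fun k q => increasing_of_path_to_root hG (Fintype.card V) k q (by omega)
  -- choose j minimizing dist to v
  obtain ⟨j, hjmem, hminset⟩ := Finset.exists_min_image (Finset.range (m + 1))
    (fun i => G.dist (p i) v) ⟨0, by simp⟩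
  have hjm : j ≤ m := by simpa [Nat.lt_succ_iff] using Finset.mem_range.mp hjmem
  have hmin : ∀ i ≤ m, G.dist (p j) v ≤ G.dist (p i) v := fun i hi =>
    hminset i (Finset.mem_range.mpr (by omega))
  obtain ⟨w, hw⟩ := (hconn (p j) v).exists_walk_length_eq_dist
  set d := w.length with hd
  set t : ℕ → V := fun s => w.getVert s with htdef
  have ht0 : t 0 = p j := w.getVert_zero
  have htd : t d = v := w.getVert_length
  have htadj : ∀ s < d, G.Adj (t s) (t (s + 1)) := fun s hs => w.adj_getVert_succ hs
  -- distance along t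
  have hdist_t : ∀ s ≤ d, G.dist (t s) v ≤ d - s := by
    intro s hs
    have := dist_le_of_fn G (fun i => t (s + i)) (d - s)
      (fun i hi => htadj (s + i) (by omega))
    simp only [Nat.add_zero] at this
    rwa [show s + (d - s) = d from by omega, htd] at this
  have hdist_head : ∀ a ≤ d, G.dist (p j) (t a) ≤ a := by
    intro a ha
    have := dist_le_of_fn G t a (fun i hi => htadj i (by omega))
    rwa [ht0] at this
  have htinj : ∀ a ≤ d, ∀ b ≤ d, t a = t b → a = b := by
    have main : ∀ a b, a < b → b ≤ d → t a ≠ t b := by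
      intro a b hab hbd heq
      have h1 : G.dist (p j) v ≤ G.dist (p j) (t a) + G.dist (t a) v :=
        hconn.dist_triangle
      have h2 := hdist_head a (by omega)
      have h3 := hdist_t b hbd
      rw [← heq] at h3
      have h4 : G.dist (p j) v = d := hw.symm
      omega
    intro a ha b hb heq
    rcases lt_trichotomy a b with h | h | h
    · exact absurd heq (main a b h hb)
    · exact h
    · exact absurd heq.symm (main b a h ha)
  have hdisj : ∀ s, 1 ≤ s → s ≤ d → ∀ i ≤ m, t s ≠ p i := by
    intro s hs1 hsd i hi heq
    have h1 := hdist_t s hsd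
    rw [heq] at h1
    have h2 := hmin i hi
    have h4 : G.dist (p j) v = d := hw.symm
    omega
  -- Part 1 : j ≤ 1
  have hj1 : j ≤ 1 := by
    by_contra hj2
    push_neg at hj2
    have hqj : IsSimplePathOn G p j :=
      ⟨fun a ha b hb => hp.1 a (by omega) b (by omega), fun i hi => hp.2 i (by omega)⟩
    have hr := glue_simple p j t d hqj ht0 htadj htinj
      (fun s hs1 hsd i hi => hdisj s hs1 hsd i (by omega))
    have hrend : (fun i => if i ≤ j then p i else t (i - j)) (j + d) = v := by
      rw [glue_end p j t d ht0, htd]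
    have h0 := key (j + d) _ hr hrend 0 (by omega)
    simp only [Nat.zero_add] at h0
    rw [if_pos (by omega : (0:ℕ) ≤ j), if_pos (by omega : (1:ℕ) ≤ j),
      if_pos (by omega : (2:ℕ) ≤ j)] at h0
    omega
  -- Part 2 : m - j ≤ 1
  have hj2 : m - j ≤ 1 := by
    by_contra hj2
    push_neg at hj2
    set q' : ℕ → V := fun i => p (m - i) with hq'def
    have hq' : IsSimplePathOn G q' (m - j) := by
      constructor
      · intro a ha b hb heq
        have := hp.1 (m - a) (by omega) (m - b) (by omega) heq
        omega
      · intro i hi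
        have h1 : G.Adj (p (m - i - 1)) (p (m - i - 1 + 1)) := hp.2 (m - i - 1) (by omega)
        rw [show m - i - 1 + 1 = m - i from by omega] at h1
        simpa [hq'def, show m - (i + 1) = m - i - 1 from by omega] using h1.symm
    have ht0' : t 0 = q' (m - j) := by
      rw [ht0, hq'def]
      simp only []
      rw [show m - (m - j) = j from by omega]
    have hr := glue_simple q' (m - j) t d hq' ht0' htadj htinj
      (fun s hs1 hsd i hi => hdisj s hs1 hsd (m - i) (by omega))
    have hrend : (fun i => if i ≤ m - j then q' i else t (i - (m - j))) (m - j + d) = v := by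
      rw [glue_end q' (m - j) t d ht0', htd]
    have h0 := key (m - j + d) _ hr hrend 0 (by omega)
    simp only [Nat.zero_add] at h0
    rw [if_pos (by omega : (0:ℕ) ≤ m - j), if_pos (by omega : (1:ℕ) ≤ m - j),
      if_pos (by omega : (2:ℕ) ≤ m - j)] at h0
    simp only [hq'def, Nat.sub_zero] at h0
    rw [show m - 1 = m - 2 + 1 from by omega] at hinc
    rw [show m - 1 = m - 2 + 1 from by omega] at h0
    rw [hsym (p m) (p (m - 2 + 1)), hsym (p (m - 2 + 1)) (p (m - 2))] at h0
    omega
  omega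
end
end

section
/- Let (G_ω, v) be an increasing weighted tree. Then every weighted subtree T_ω of G_ω (a subgraph T of G that is a tree, with weight function the restriction of ω) is an increasing weighted tree with respect to some root; precisely, if v ∈ V(T) then (T_ω, v) is an increasing weighted tree, and if v ∉ V(T) then (T_ω, v_1) is an increasing weighted tree, where v_1 is the unique vertex of T lying on the path in G from T to v. -/
open SimpleGraph

noncomputable section

variable {V : Type*}

namespace WSIAux

/-- The walk determined by a function `p` with consecutive adjacency. -/
def pathWalk (G : SimpleGraph V) (p : ℕ → V) :
    ∀ k, (∀ i < k, G.Adj (p i) (p (i + 1))) → G.Walk (p 0) (p k)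
  | 0, _ => Walk.nil
  | (k + 1), h =>
      (pathWalk G p k (fun i hi => h i (by omega))).concat (h k (by omega))

lemma pathWalk_length {G : SimpleGraph V} (p : ℕ → V) (k : ℕ)
    (h : ∀ i < k, G.Adj (p i) (p (i + 1))) :
    (pathWalk G p k h).length = k := by
  induction k with
  | zero => rfl
  | succ k ih => simp [pathWalk, ih]

lemma pathWalk_support {G : SimpleGraph V} (p : ℕ → V) (k : ℕ)
    (h : ∀ i < k, G.Adj (p i) (p (i + 1))) :
    (pathWalk G p k h).support = (List.range (k + 1)).map p := by
  induction k with
  | zero => simp [pathWalk, List.range_succ]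
  | succ k ih =>
      simp only [pathWalk, SimpleGraph.Walk.support_concat, ih]
      rw [List.range_succ (n := k + 1)]
      simp

/-- Key lemma: in an increasing weighted tree, *every* simple path ending at the root
is increasing (not only those starting at a leaf). -/
lemma key [Fintype V] {G : SimpleGraph V} {ω : V → V → ℕ} {v : V}
    (hG : IsIncreasingWeightedTree G ω v) :
    ∀ (n : ℕ) (p : ℕ → V) (k : ℕ), Fintype.card V - k ≤ n →
      IsSimplePathOn G p k → p k = v → IsIncreasingPath ω p k := by
  intro n
  induction n with
  | zero =>
      intro p k hn hsp hpk
      -- k + 1 ≤ card V from injectivity, contradiction with card V - k ≤ 0... not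
      -- necessarily a contradiction if k ≥ card V - but injectivity gives k + 1 ≤ card.
      have hcard : k + 1 ≤ Fintype.card V := by
        have h := Finset.card_le_card_of_injOn (s := Finset.range (k + 1))
          (t := Finset.univ) p (fun a _ => Finset.mem_univ (p a))
          (fun a ha b hb hab => by
            simp only [Finset.coe_range, Set.mem_Iio] at ha hb
            exact hsp.1 a (by omega) b (by omega) hab)
        simpa using h
      omega
  | succ n ih =>
      intro p k hn hsp hpk
      by_cases hleaf : IsLeafVertex G (p 0)
      · exact hG.2 p k hsp hleaf hpk
      · by_cases hk : k ≤ 1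
        · intro i hi; omega
        · -- k ≥ 2; p 0 has a neighbour u ≠ p 1; extend the path backwards.
          have adj01 : G.Adj (p 0) (p 1) := hsp.2 0 (by omega)
          have hex : ∃ u, G.Adj (p 0) u ∧ u ≠ p 1 := by
            by_contra hall
            push_neg at hall
            exact hleaf ⟨p 1, adj01, fun z hz => hall z hz⟩
          obtain ⟨u, hu, hune⟩ := hex
          -- u is not on the path
          have hnot : ∀ j ≤ k, u ≠ p j := by
            intro j hj huj
            rcases Nat.lt_or_ge j 2 with hj2 | hj2
            · interval_cases j
              · exact G.loopless.irrefl (p 0) (huj ▸ hu)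
              · exact hune huj
            · -- two distinct paths p 0 → p j in the tree G: contradiction
              have adjj : G.Adj (p 0) (p j) := huj ▸ hu
              have hadjW : ∀ i < j, G.Adj (p i) (p (i + 1)) :=
                fun i hi => hsp.2 i (by omega)
              have hW1 : (pathWalk G p j hadjW).IsPath := by
                rw [Walk.isPath_def, pathWalk_support]
                refine List.Nodup.map_on ?_ List.nodup_range
                intro x hx y hy hxy
                exact hsp.1 x (by have := List.mem_range.mp hx; omega)
                  y (by have := List.mem_range.mp hy; omega) hxy
              have hW2 : (Walk.cons adjj Walk.nil).IsPath := by
                rw [Walk.cons_isPath_iff]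
                exact ⟨Walk.IsPath.nil, by simp [adjj.ne]⟩
              have heq := (hG.1.existsUnique_path (p 0) (p j)).unique hW1 hW2
              have := congrArg Walk.length heq
              rw [pathWalk_length] at this
              simp [Walk.length_cons] at this
              omega
          -- the extended path
          set p' : ℕ → V := fun i => if i = 0 then u else p (i - 1) with hp'
          have hp'0 : p' 0 = u := by simp [hp']
          have hp'succ : ∀ i, p' (i + 1) = p i := by intro i; simp [hp']
          have hsp' : IsSimplePathOn G p' (k + 1) := by
            constructor
            · intro i hi j hj hij
              match i, j with
              | 0, 0 => rfl
              | 0, (j + 1) =>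
                  rw [hp'0, hp'succ] at hij
                  exact absurd hij (hnot j (by omega))
              | (i + 1), 0 =>
                  rw [hp'0, hp'succ] at hij
                  exact absurd hij.symm (hnot i (by omega))
              | (i + 1), (j + 1) =>
                  rw [hp'succ, hp'succ] at hij
                  have := hsp.1 i (by omega) j (by omega) hij
                  omega
            · intro i hi
              match i with
              | 0 => rw [hp'0, hp'succ]; exact hu.symm
              | (i + 1) =>
                  rw [hp'succ, hp'succ]
                  exact hsp.2 i (by omega)
          have hcard : k + 2 ≤ Fintype.card V := by
            have h := Finset.card_le_card_of_injOn (s := Finset.range (k + 2))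
              (t := Finset.univ) p' (fun a _ => Finset.mem_univ (p' a))
              (fun a ha b hb hab => by
                simp only [Finset.coe_range, Set.mem_Iio] at ha hb
                exact hsp'.1 a (by omega) b (by omega) hab)
            simpa using h
          have hinc' := ih p' (k + 1) (by omega) hsp' (by rw [hp'succ]; exact hpk)
          intro i hi
          have h2 := hinc' (i + 1) (by omega)
          rwa [hp'succ, hp'succ, hp'succ] at h2

end WSIAux

/-- Lemma 1.4: every weighted subtree `T_ω` of an increasing weighted tree
`(G_ω, v)` is an increasing weighted tree: if `v ∈ V(T)` then `(T_ω, v)` is one, and if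
`v ∉ V(T)` then `(T_ω, v₁)` is one, where `v₁` is the unique vertex of `T` lying on the path
in `G` from `T` to `v` (i.e. any vertex `v₁ ∈ V(T)` admitting a simple path from `v₁` to `v`
in `G` meeting `T` only at `v₁`). -/
theorem weighted_subtree_is_increasing {V : Type*} [Fintype V]
    (G : SimpleGraph V) (ω : V → V → ℕ)
    (hsym : ∀ a b, ω a b = ω b a) (hpos : ∀ a b, G.Adj a b → 0 < ω a b)
    (v : V) (hG : IsIncreasingWeightedTree G ω v)
    (T : G.Subgraph) (hT : T.coe.IsTree) :
    (∀ hv : v ∈ T.verts,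
      IsIncreasingWeightedTree T.coe (fun a b => ω a.1 b.1) ⟨v, hv⟩) ∧
    (v ∉ T.verts → ∀ (v₁ : V) (hv₁ : v₁ ∈ T.verts) (p : ℕ → V) (k : ℕ),
      IsSimplePathOn G p k → p 0 = v₁ → p k = v → (∀ i ≤ k, p i ∈ T.verts → i = 0) →
      IsIncreasingWeightedTree T.coe (fun a b => ω a.1 b.1) ⟨v₁, hv₁⟩) := by
  constructor
  · intro hv
    refine ⟨hT, ?_⟩
    intro q m hq _ hqm
    have hsr : IsSimplePathOn G (fun i => (q i).1) m :=
      ⟨fun i hi j hj hij => hq.1 i hi j hj (Subtype.ext hij),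
       fun i hi => T.adj_sub (hq.2 i hi)⟩
    have hrm : (q m).1 = v := congrArg Subtype.val hqm
    have hinc := WSIAux.key hG (Fintype.card V - m) (fun i => (q i).1) m le_rfl hsr hrm
    intro i hi
    exact hinc i hi
  · intro hvT v₁ hv₁ p k hp hp0 hpk hmeet
    have hk1 : 1 ≤ k := by
      rcases Nat.eq_zero_or_pos k with h0 | h; · exact absurd (hpk ▸ h0 ▸ hp0 ▸ hv₁) hvT
      exact h
    refine ⟨hT, ?_⟩
    intro q m hq _ hqm
    set r : ℕ → V := fun i => if i ≤ m then (q i).1 else p (i - m) with hr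
    have hrle : ∀ i ≤ m, r i = (q i).1 := by intro i hi; simp [hr, hi]
    have hrge : ∀ i, m ≤ i → r i = p (i - m) := by
      intro i hi
      rcases Nat.eq_or_lt_of_le hi with h | h
      · rw [← h, hrle m le_rfl, hqm, Nat.sub_self]; exact hp0.symm
      · simp [hr, Nat.not_le.mpr h]
    have hsr : IsSimplePathOn G r (m + k) := by
      constructor
      · intro i hi j hj hij
        by_cases him : i ≤ m <;> by_cases hjm : j ≤ m
        · exact hq.1 i him j hjm (Subtype.ext (by rwa [← hrle i him, ← hrle j hjm]))
        · exfalso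
          rw [hrle i him, hrge j (by omega)] at hij
          have := hmeet (j - m) (by omega) (hij ▸ (q i).2)
          omega
        · exfalso
          rw [hrge i (by omega), hrle j hjm] at hij
          have := hmeet (i - m) (by omega) (hij ▸ (q j).2)
          omega
        · rw [hrge i (by omega), hrge j (by omega)] at hij
          have := hp.1 (i - m) (by omega) (j - m) (by omega) hij
          omega
      · intro i hi
        by_cases hi' : i + 1 ≤ m
        · rw [hrle i (by omega), hrle (i + 1) hi']
          exact T.adj_sub (hq.2 i (by omega))
        · rw [hrge i (by omega), hrge (i + 1) (by omega)]
          have h2 : i + 1 - m = (i - m) + 1 := by omega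
          rw [h2]
          exact hp.2 (i - m) (by omega)
    have hrend : r (m + k) = v := by
      rw [hrge (m + k) (by omega)]
      have : m + k - m = k := by omega
      rw [this, hpk]
    have hinc := WSIAux.key hG (Fintype.card V - (m + k)) r (m + k) le_rfl hsr hrend
    intro i hi
    have h2 := hinc i (by omega)
    rwa [hrle i (by omega), hrle (i + 1) (by omega), hrle (i + 2) (by omega)] at h2
end
end

section
/- Let (G_ω, v) be an increasing weighted tree and assume G is not a star graph with center v. Then there exists a longest simple path v = v_0 → v_1 → ⋯ → v_k in G starting at v such that: (1) v_k is a leaf of G; (2) if u ∈ N_G(v_{k−2}) is not a leaf, then ω(v_{k−1} v_{k−2}) ≤ ω(v_{k−2} u); (3) v_{k−2} is the only non-leaf vertex in N_G(v_{k−1}); (4) ω(v_{k−1} u) ≤ ω(v_{k−1} v_{k−2}) for all u ∈ N_G(v_{k−1}); and (5) ω(v_{k−1} v_k) ≤ ω(v_{k−1} u) for all u ∈ N_G(v_{k−1}). -/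
open SimpleGraph

noncomputable section

variable {V : Type*}

/-- `G` is a star graph with center `v`: a tree all of whose edges are incident to `v`. -/
def IsStarWithCenter (G : SimpleGraph V) (v : V) : Prop :=
  G.IsTree ∧ ∀ a b, G.Adj a b → a = v ∨ b = v

namespace GLPAux

variable {G : SimpleGraph V}

def pathWalk (G : SimpleGraph V) (p : ℕ → V) :
    ∀ k, (∀ i < k, G.Adj (p i) (p (i + 1))) → G.Walk (p 0) (p k)
  | 0, _ => SimpleGraph.Walk.nil
  | (k+1), h => (pathWalk G p k (fun i hi => h i (by omega))).concat (h k (by omega))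

lemma pathWalk_length (p : ℕ → V) (k : ℕ) (h : ∀ i < k, G.Adj (p i) (p (i + 1))) :
    (pathWalk G p k h).length = k := by
  induction k with
  | zero => rfl
  | succ n ih => simp [pathWalk, ih]

lemma pathWalk_support (p : ℕ → V) (k : ℕ) (h : ∀ i < k, G.Adj (p i) (p (i + 1))) :
    (pathWalk G p k h).support = (List.range (k+1)).map p := by
  induction k with
  | zero => rfl
  | succ n ih =>
    rw [pathWalk, SimpleGraph.Walk.support_concat, ih]
    simp [List.range_succ]

lemma pathWalk_isPath {p : ℕ → V} {k : ℕ} (h : ∀ i < k, G.Adj (p i) (p (i + 1)))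
    (hinj : ∀ i ≤ k, ∀ j ≤ k, p i = p j → i = j) :
    (pathWalk G p k h).IsPath := by
  rw [SimpleGraph.Walk.isPath_def, pathWalk_support]
  refine List.Nodup.map_on ?_ List.nodup_range
  intro i hi j hj hpij
  rw [List.mem_range] at hi hj
  exact hinj i (by omega) j (by omega) hpij

lemma walk_eq (hac : G.IsAcyclic) {a b : V} {w1 w2 : G.Walk a b}
    (h1 : w1.IsPath) (h2 : w2.IsPath) : w1 = w2 :=
  congrArg Subtype.val (SimpleGraph.isAcyclic_iff_path_unique.mp hac ⟨w1, h1⟩ ⟨w2, h2⟩)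

lemma subwalk_exists {p : ℕ → V} {k : ℕ} (hp : IsSimplePathOn G p k) {i j : ℕ}
    (hj : j ≤ k) (hij : i < j) :
    ∃ w : G.Walk (p i) (p j), w.IsPath ∧ w.length = j - i ∧
      w.support = (List.range (j - i + 1)).map (fun t => p (i + t)) := by
  set q : ℕ → V := fun t => p (i + t) with hq
  have hadj : ∀ t < j - i, G.Adj (q t) (q (t + 1)) := by
    intro t ht
    have := hp.2 (i + t) (by omega)
    simpa [hq, Nat.add_assoc] using this
  have hqj : q (j - i) = p j := by simp only [hq]; congr 1; omega
  have hinj : ∀ a ≤ j - i, ∀ b ≤ j - i, q a = q b → a = b := by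
    intro a ha b hb hab
    have := hp.1 (i + a) (by omega) (i + b) (by omega) hab
    omega
  refine ⟨(pathWalk G q (j - i) hadj).copy rfl hqj, ?_, ?_, ?_⟩
  · rw [SimpleGraph.Walk.isPath_copy]
    exact pathWalk_isPath hadj hinj
  · rw [SimpleGraph.Walk.length_copy, pathWalk_length]
  · rw [SimpleGraph.Walk.support_copy, pathWalk_support]

/-- On a simple path in an acyclic graph, adjacency happens only between consecutive vertices. -/
lemma adj_consec (hac : G.IsAcyclic) {p : ℕ → V} {k : ℕ} (hp : IsSimplePathOn G p k)
    {i j : ℕ} (hi : i ≤ k) (hj : j ≤ k) (hadj : G.Adj (p i) (p j)) :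
    j = i + 1 ∨ i = j + 1 := by
  have key : ∀ a b, a ≤ k → b ≤ k → a < b → G.Adj (p a) (p b) → b = a + 1 := by
    intro a b ha hb hab had
    by_contra hne
    obtain ⟨w, hwP, hwl, -⟩ := subwalk_exists hp hb hab
    have h2 : (SimpleGraph.Walk.cons had SimpleGraph.Walk.nil).IsPath := by
      rw [SimpleGraph.Walk.cons_isPath_iff]
      refine ⟨SimpleGraph.Walk.IsPath.nil, ?_⟩
      simp only [SimpleGraph.Walk.support_nil, List.mem_singleton]
      exact had.ne
    have heq := walk_eq hac hwP h2
    have hl : (b - a) = 1 := by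
      rw [← hwl, heq]; rfl
    omega
  rcases lt_trichotomy i j with h | h | h
  · exact Or.inl (key i j hi hj h hadj)
  · subst h; exact absurd hadj (G.irrefl)
  · exact Or.inr (key j i hj hi h hadj.symm)

/-- A vertex off the path cannot be adjacent to two distinct path vertices. -/
lemma off_path (hac : G.IsAcyclic) {p : ℕ → V} {k : ℕ} (hp : IsSimplePathOn G p k)
    {i j : ℕ} {u : V} (hj : j ≤ k) (hij : i < j) (hu : ∀ t ≤ k, u ≠ p t)
    (h1 : G.Adj (p i) u) (h2 : G.Adj u (p j)) : False := by
  obtain ⟨w, hwP, -, hwS⟩ := subwalk_exists hp hj hij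
  have hpij : p i ≠ p j := fun h => by
    have := hp.1 i (by omega) j hj h; omega
  have h2P : (SimpleGraph.Walk.cons h1 (SimpleGraph.Walk.cons h2 SimpleGraph.Walk.nil)).IsPath := by
    rw [SimpleGraph.Walk.cons_isPath_iff, SimpleGraph.Walk.cons_isPath_iff]
    refine ⟨⟨SimpleGraph.Walk.IsPath.nil, ?_⟩, ?_⟩
    · simp only [SimpleGraph.Walk.support_nil, List.mem_singleton]
      exact h2.ne
    · simp only [SimpleGraph.Walk.support_cons, SimpleGraph.Walk.support_nil,
        List.mem_cons, List.mem_singleton]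
      push_neg
      exact ⟨fun h => hu i (by omega) h.symm, hpij, List.not_mem_nil⟩
  have heq := walk_eq hac hwP h2P
  have hmem : u ∈ w.support := by
    rw [heq]
    simp [SimpleGraph.Walk.support_cons]
  rw [hwS] at hmem
  obtain ⟨t, ht, hqt⟩ := List.mem_map.mp hmem
  rw [List.mem_range] at ht
  exact hu (i + t) (by omega) hqt.symm

/-- Any neighbour of the endpoint of a maximum-length path from `v` is the
previous vertex on the path. -/
lemma endpoint_neighbor (hac : G.IsAcyclic) {v : V} {k : ℕ} (hk : 1 ≤ k)
    (hmax : ∀ (q : ℕ → V) (m : ℕ), IsSimplePathOn G q m → q 0 = v → m ≤ k)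
    {q : ℕ → V} (hq : IsSimplePathOn G q k) (hq0 : q 0 = v) :
    ∀ w, G.Adj (q k) w → w = q (k - 1) := by
  intro w hw
  by_contra hne
  have hwoff : ∀ t ≤ k, w ≠ q t := by
    intro t ht heq
    subst heq
    rcases adj_consec hac hq le_rfl ht hw with h | h
    · omega
    · exact hne (congrArg q (by omega))
  have hq'path : IsSimplePathOn G (Function.update q (k+1) w) (k + 1) := by
    constructor
    · intro i hi j hj heq
      by_cases e1 : i = k + 1 <;> by_cases e2 : j = k + 1
      · omega
      · rw [e1, Function.update_self, Function.update_of_ne e2] at heq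
        exact absurd heq (hwoff j (by omega))
      · rw [e2, Function.update_self, Function.update_of_ne e1] at heq
        exact absurd heq ((hwoff i (by omega)).symm)
      · rw [Function.update_of_ne e1, Function.update_of_ne e2] at heq
        exact hq.1 i (by omega) j (by omega) heq
    · intro i hik
      by_cases e : i = k
      · subst e
        rw [Function.update_of_ne (by omega), Function.update_self]
        exact hw
      · rw [Function.update_of_ne (by omega : i ≠ k + 1),
          Function.update_of_ne (by omega : i + 1 ≠ k + 1)]
        exact hq.2 i (by omega)
  have := hmax _ (k + 1) hq'path
    (by rw [Function.update_of_ne (by omega : (0:ℕ) ≠ k + 1)]; exact hq0)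
  omega

/-- The endpoint of a maximum-length path from `v` is a leaf. -/
lemma endpoint_leaf (hac : G.IsAcyclic) {v : V} {k : ℕ} (hk : 1 ≤ k)
    (hmax : ∀ (q : ℕ → V) (m : ℕ), IsSimplePathOn G q m → q 0 = v → m ≤ k)
    {q : ℕ → V} (hq : IsSimplePathOn G q k) (hq0 : q 0 = v) :
    IsLeafVertex G (q k) := by
  have hadj : G.Adj (q k) (q (k - 1)) := by
    have := hq.2 (k - 1) (by omega)
    rw [show k - 1 + 1 = k by omega] at this
    exact this.symm
  exact ⟨q (k - 1), hadj, fun y hy => endpoint_neighbor hac hk hmax hq hq0 y hy⟩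

/-- The reversed increasing conditions for a maximum-length path from the root. -/
lemma rev_increasing {ω : V → V → ℕ} {v : V} (hG : IsIncreasingWeightedTree G ω v)
    {k : ℕ} (hk : 2 ≤ k)
    (hmax : ∀ (q : ℕ → V) (m : ℕ), IsSimplePathOn G q m → q 0 = v → m ≤ k)
    {q : ℕ → V} (hq : IsSimplePathOn G q k) (hq0 : q 0 = v) :
    ω (q k) (q (k - 1)) ≤ ω (q (k - 1)) (q (k - 2)) ∧
      (3 ≤ k → ω (q (k - 1)) (q (k - 2)) ≤ ω (q (k - 2)) (q (k - 3))) := by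
  have hac : G.IsAcyclic := hG.1.2
  have hrpath : IsSimplePathOn G (fun i => q (k - i)) k := by
    constructor
    · intro i hi j hj heq
      have := hq.1 (k - i) (by omega) (k - j) (by omega) heq
      omega
    · intro i hik
      have h1 := hq.2 (k - i - 1) (by omega)
      rw [show k - i - 1 + 1 = k - i by omega] at h1
      show G.Adj (q (k - i)) (q (k - (i + 1)))
      rw [show k - (i + 1) = k - i - 1 by omega]
      exact h1.symm
  have hleaf : IsLeafVertex G (q k) := endpoint_leaf hac (by omega) hmax hq hq0
  have hrk : (fun i => q (k - i)) k = v := by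
    show q (k - k) = v
    rw [Nat.sub_self]
    exact hq0
  have hinc := hG.2 (fun i => q (k - i)) k hrpath (by simpa using hleaf) hrk
  constructor
  · simpa using hinc 0 hk
  · intro h3
    simpa using hinc 1 (by omega)

/-- Replacing the last vertex of a maximal path by another neighbour of the
second-to-last vertex gives another simple path from `v`. -/
lemma swap_path (hac : G.IsAcyclic) {v : V} {k : ℕ} (hk : 2 ≤ k)
    {q : ℕ → V} (hq : IsSimplePathOn G q k) (hq0 : q 0 = v)
    {u : V} (hu : G.Adj (q (k - 1)) u) (h1 : u ≠ q (k - 2)) (h2 : u ≠ q k) :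
    IsSimplePathOn G (Function.update q k u) k ∧ (Function.update q k u) 0 = v := by
  have huoff : ∀ t ≤ k, u ≠ q t := by
    intro t ht heq
    subst heq
    rcases adj_consec hac hq (by omega) ht hu with h | h
    · exact h2 (congrArg q (by omega))
    · exact h1 (congrArg q (by omega))
  refine ⟨⟨?_, ?_⟩, ?_⟩
  · intro i hi j hj heq
    by_cases e1 : i = k <;> by_cases e2 : j = k
    · omega
    · rw [e1, Function.update_self, Function.update_of_ne e2] at heq
      exact absurd heq (huoff j (by omega))
    · rw [e2, Function.update_self, Function.update_of_ne e1] at heq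
      exact absurd heq ((huoff i (by omega)).symm)
    · rw [Function.update_of_ne e1, Function.update_of_ne e2] at heq
      exact hq.1 i (by omega) j (by omega) heq
  · intro i hik
    by_cases e : i + 1 = k
    · rw [Function.update_of_ne (by omega : i ≠ k), e, Function.update_self,
        show i = k - 1 by omega]
      exact hu
    · rw [Function.update_of_ne (by omega : i ≠ k), Function.update_of_ne e]
      exact hq.2 i (by omega)
  · rw [Function.update_of_ne (by omega : (0:ℕ) ≠ k)]
    exact hq0

lemma exists_max (P : ℕ → Prop) (h0 : P 0) {n : ℕ} (hb : ∀ m, P m → m ≤ n) :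
    ∃ k, P k ∧ ∀ m, P m → m ≤ k := by
  classical
  refine ⟨Nat.findGreatest P n, ?_, ?_⟩
  · exact Nat.findGreatest_spec (Nat.zero_le _) h0
  · intro m hm
    exact Nat.le_findGreatest (hb m hm) hm

end GLPAux

open GLPAux in
/-- Lemma 1.5: if `(G_ω, v)` is an increasing weighted tree and `G` is not
a star graph with center `v`, then there is a longest simple path `v = p 0 → ⋯ → p k`
starting at `v` satisfying the five listed conditions. -/
theorem exists_good_longest_path {V : Type*} [Fintype V]
    (G : SimpleGraph V) (ω : V → V → ℕ)
    (hsym : ∀ a b, ω a b = ω b a) (hpos : ∀ a b, G.Adj a b → 0 < ω a b)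
    (v : V) (hG : IsIncreasingWeightedTree G ω v)
    (hstar : ¬ IsStarWithCenter G v) :
    ∃ (p : ℕ → V) (k : ℕ), IsSimplePathOn G p k ∧ p 0 = v ∧
      (∀ (q : ℕ → V) (m : ℕ), IsSimplePathOn G q m → q 0 = v → m ≤ k) ∧ 2 ≤ k ∧
      IsLeafVertex G (p k) ∧
      (∀ u, G.Adj (p (k - 2)) u → ¬ IsLeafVertex G u →
        ω (p (k - 1)) (p (k - 2)) ≤ ω (p (k - 2)) u) ∧
      (∀ u, G.Adj (p (k - 1)) u → ¬ IsLeafVertex G u → u = p (k - 2)) ∧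
      (∀ u, G.Adj (p (k - 1)) u → ω (p (k - 1)) u ≤ ω (p (k - 1)) (p (k - 2))) ∧
      (∀ u, G.Adj (p (k - 1)) u → ω (p (k - 1)) (p k) ≤ ω (p (k - 1)) u) := by
  classical
  have hT : G.IsTree := hG.1
  have hac : G.IsAcyclic := hT.2
  -- an edge away from the root
  have hedge : ∃ a b, G.Adj a b ∧ a ≠ v ∧ b ≠ v := by
    by_contra hcon
    push_neg at hcon
    refine hstar ⟨hT, fun a b hab => ?_⟩
    by_cases h : a = v
    · exact Or.inl h
    · exact Or.inr (hcon a b hab h)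
  -- a two-step path out of the root
  have htwo : ∃ x y : V, G.Adj v x ∧ G.Adj x y ∧ y ≠ v ∧ x ≠ y ∧ x ≠ v := by
    obtain ⟨a, b, hab, ha, hb⟩ := hedge
    obtain ⟨w0⟩ := hT.1.preconnected v a
    obtain ⟨w, hwP⟩ : ∃ w : G.Walk v a, w.IsPath := ⟨(w0.toPath : G.Path v a).1, (w0.toPath).2⟩
    cases w with
    | nil => exact absurd rfl ha
    | @cons _ c _ h t =>
      cases t with
      | nil => exact ⟨a, b, h, hab, hb, hab.ne, ha⟩
      | @cons _ d _ h2 t2 =>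
        rw [SimpleGraph.Walk.cons_isPath_iff] at hwP
        have hdmem : d ∈ (SimpleGraph.Walk.cons h2 t2).support := by
          rw [SimpleGraph.Walk.support_cons]
          exact List.mem_cons_of_mem _ t2.start_mem_support
        have hdv : d ≠ v := fun hdv => hwP.2 (hdv ▸ hdmem)
        exact ⟨c, d, h, h2, hdv, h2.ne, h.ne'⟩
  -- the maximal length of a simple path from `v`
  have hcard : ∀ (q : ℕ → V) (m : ℕ), IsSimplePathOn G q m → m ≤ Fintype.card V := by
    intro q m hq
    have hinj : Function.Injective (fun i : Fin (m + 1) => q i) := by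
      intro a b hab
      exact Fin.ext (hq.1 a.val a.is_le b.val b.is_le hab)
    have := Fintype.card_le_of_injective _ hinj
    rw [Fintype.card_fin] at this
    omega
  have hPP0 : ∃ q : ℕ → V, IsSimplePathOn G q 0 ∧ q 0 = v :=
    ⟨fun _ => v, ⟨fun i hi j hj _ => by omega, fun i hi => absurd hi (by omega)⟩, rfl⟩
  obtain ⟨k, hPPk, hmax'⟩ := exists_max (fun m => ∃ q : ℕ → V, IsSimplePathOn G q m ∧ q 0 = v)
    hPP0 (n := Fintype.card V) (fun m hm => hm.elim fun q hq => hcard q m hq.1)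
  have hmax : ∀ (q : ℕ → V) (m : ℕ), IsSimplePathOn G q m → q 0 = v → m ≤ k :=
    fun q m hq hq0 => hmax' m ⟨q, hq, hq0⟩
  have hk2 : 2 ≤ k := by
    obtain ⟨x, y, hvx, hxy, hyv, hxy', hxv⟩ := htwo
    have h1 : v ≠ x := hvx.ne
    have h3 : v ≠ y := fun h => hyv h.symm
    refine hmax (fun i => if i = 0 then v else if i = 1 then x else y) 2 ⟨?_, ?_⟩ (by simp)
    · intro i hi j hj heq
      interval_cases i <;> interval_cases j <;> simp_all
    · intro i hi
      interval_cases i <;> simp_all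
  -- leaf facts
  have hleaf : ∀ q : ℕ → V, IsSimplePathOn G q k → q 0 = v → IsLeafVertex G (q k) :=
    fun q hq hq0 => endpoint_leaf hac (by omega) hmax hq hq0
  -- choose a maximal path minimizing first the second-to-last edge, then the last edge
  set A : Set ℕ :=
    {n | ∃ q : ℕ → V, (IsSimplePathOn G q k ∧ q 0 = v) ∧ ω (q (k-1)) (q (k-2)) = n} with hAdef
  have hAne : A.Nonempty := by
    obtain ⟨q, hq1, hq2⟩ := hPPk
    exact ⟨_, q, ⟨hq1, hq2⟩, rfl⟩
  set B : Set ℕ := {n | ∃ q : ℕ → V, (IsSimplePathOn G q k ∧ q 0 = v) ∧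
    ω (q (k-1)) (q (k-2)) = sInf A ∧ ω (q (k-1)) (q k) = n} with hBdef
  have hBne : B.Nonempty := by
    obtain ⟨q, hq, hqv⟩ := Nat.sInf_mem hAne
    exact ⟨_, q, hq, hqv, rfl⟩
  obtain ⟨p, ⟨hp, hp0⟩, hpm1, hpm2⟩ := Nat.sInf_mem hBne
  have hmin1 : ∀ q : ℕ → V, IsSimplePathOn G q k → q 0 = v →
      ω (p (k-1)) (p (k-2)) ≤ ω (q (k-1)) (q (k-2)) := by
    intro q hq hq0
    rw [hpm1]
    exact Nat.sInf_le ⟨q, ⟨hq, hq0⟩, rfl⟩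
  have hmin2 : ∀ q : ℕ → V, IsSimplePathOn G q k → q 0 = v →
      ω (q (k-1)) (q (k-2)) = ω (p (k-1)) (p (k-2)) →
      ω (p (k-1)) (p k) ≤ ω (q (k-1)) (q k) := by
    intro q hq hq0 he
    rw [hpm2]
    exact Nat.sInf_le ⟨q, ⟨hq, hq0⟩, by rw [he, hpm1], rfl⟩
  have hrev := fun (q : ℕ → V) hq hq0 => rev_increasing hG hk2 hmax (q := q) hq hq0
  -- the swap construction
  have hswap : ∀ u, G.Adj (p (k-1)) u → u ≠ p (k-2) → u ≠ p k →
      IsSimplePathOn G (Function.update p k u) k ∧ (Function.update p k u) 0 = v ∧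
      Function.update p k u (k-1) = p (k-1) ∧ Function.update p k u (k-2) = p (k-2) ∧
      Function.update p k u k = u := by
    intro u hu h1 h2
    obtain ⟨hq, hq0⟩ := swap_path hac hk2 hp hp0 hu h1 h2
    exact ⟨hq, hq0, Function.update_of_ne (by omega) _ _,
      Function.update_of_ne (by omega) _ _, Function.update_self _ _ _⟩
  refine ⟨p, k, hp, hp0, hmax, hk2, hleaf p hp hp0, ?_, ?_, ?_, ?_⟩
  · -- condition (2)
    intro u hu hnl
    by_cases h1 : u = p (k-1)
    · rw [h1]
      exact (hsym _ _).le
    by_cases h0 : 3 ≤ k ∧ u = p (k-3)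
    · rw [h0.2]
      exact (hrev p hp hp0).2 h0.1
    have huoff : ∀ t ≤ k, u ≠ p t := by
      intro t ht heq
      subst heq
      rcases adj_consec hac hp (by omega) ht hu with h | h
      · exact h1 (congrArg p (by omega))
      · exact h0 ⟨by omega, congrArg p (by omega)⟩
    obtain ⟨w, hw, hwne⟩ : ∃ w, G.Adj u w ∧ w ≠ p (k-2) := by
      by_contra hcon
      push_neg at hcon
      exact hnl ⟨p (k-2), hu.symm, fun y hy => hcon y hy⟩
    have hwu : w ≠ u := hw.ne'
    have hwoff : ∀ t ≤ k - 2, w ≠ p t := by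
      intro t ht heq
      subst heq
      have htne : t ≠ k - 2 := fun h => hwne (congrArg p h)
      exact off_path hac hp (by omega : k - 2 ≤ k) (by omega : t < k - 2) huoff hw.symm hu.symm
    set q := Function.update (Function.update p (k-1) u) k w with hqdef
    have e1 : q (k-1) = u := by
      rw [hqdef, Function.update_of_ne (by omega), Function.update_self]
    have e2 : q k = w := by rw [hqdef, Function.update_self]
    have e3 : ∀ i ≤ k - 2, q i = p i := by
      intro i hi
      rw [hqdef, Function.update_of_ne (by omega), Function.update_of_ne (by omega)]
    have qcase : ∀ t ≤ k, (t ≤ k - 2 ∧ q t = p t) ∨ (t = k - 1 ∧ q t = u) ∨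
        (t = k ∧ q t = w) := by
      intro t ht
      rcases Nat.lt_trichotomy t (k-1) with h | h | h
      · exact Or.inl ⟨by omega, e3 t (by omega)⟩
      · exact Or.inr (Or.inl ⟨h, by rw [h, e1]⟩)
      · exact Or.inr (Or.inr ⟨by omega, by rw [show t = k by omega, e2]⟩)
    have hqpath : IsSimplePathOn G q k := by
      constructor
      · intro i hi j hj heq
        rcases qcase i hi with ⟨hi2, hqi⟩ | ⟨hi2, hqi⟩ | ⟨hi2, hqi⟩ <;>
          rcases qcase j hj with ⟨hj2, hqj⟩ | ⟨hj2, hqj⟩ | ⟨hj2, hqj⟩ <;>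
          rw [hqi, hqj] at heq
        · exact hp.1 i (by omega) j (by omega) heq
        · exact absurd heq.symm (huoff i (by omega))
        · exact absurd heq.symm (hwoff i hi2)
        · exact absurd heq (huoff j (by omega))
        · omega
        · exact absurd heq.symm hwu
        · exact absurd heq (hwoff j hj2)
        · exact absurd heq hwu
        · omega
      · intro i hik
        rcases Nat.lt_trichotomy i (k-2) with h | h | h
        · rw [e3 i (by omega), e3 (i+1) (by omega)]
          exact hp.2 i (by omega)
        · rw [e3 i (by omega), show i + 1 = k - 1 by omega, e1, h]
          exact hu
        · rw [show i = k - 1 by omega, e1, show k - 1 + 1 = k by omega, e2]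
          exact hw
    have hq0 : q 0 = v := by rw [e3 0 (by omega), hp0]
    have := hmin1 q hqpath hq0
    rw [e1, e3 (k-2) le_rfl] at this
    rw [hsym (p (k-2)) u]
    exact this
  · -- condition (3)
    intro u hu hnl
    by_cases h1 : u = p (k-2)
    · exact h1
    by_cases h2 : u = p k
    · exact absurd (by rw [h2]; exact hleaf p hp hp0) hnl
    obtain ⟨hq, hq0, e1, e2, e3⟩ := hswap u hu h1 h2
    have := hleaf _ hq hq0
    rw [e3] at this
    exact absurd this hnl
  · -- condition (4)
    intro u hu
    by_cases h1 : u = p (k-2)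
    · rw [h1]
    by_cases h2 : u = p k
    · rw [h2, hsym (p (k-1)) (p k)]
      exact (hrev p hp hp0).1
    obtain ⟨hq, hq0, e1, e2, e3⟩ := hswap u hu h1 h2
    have := (hrev _ hq hq0).1
    rw [e1, e2, e3] at this
    rw [hsym (p (k-1)) u]
    exact this
  · -- condition (5)
    intro u hu
    by_cases h2 : u = p k
    · rw [h2]
    by_cases h1 : u = p (k-2)
    · rw [h1, hsym (p (k-1)) (p k)]
      exact (hrev p hp hp0).1
    obtain ⟨hq, hq0, e1, e2, e3⟩ := hswap u hu h1 h2
    have := hmin2 _ hq hq0 (by rw [e1, e2])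
    rwa [e1, e3] at this
end
end

section
/- Let (G_ω, v) be an increasing weighted tree and let S be an independent set of G. Then N_G(S) is an independent set of the graph G_S. -/
open SimpleGraph

noncomputable section

variable {V : Type*}

/-- `S` is an independent set of `G`. -/
def IsIndepSetOn (G : SimpleGraph V) (S : Set V) : Prop :=
  ∀ a ∈ S, ∀ b ∈ S, ¬ G.Adj a b

/-- `N_G(S)`, the neighbourhood of the set `S`. -/
def setNbhd (G : SimpleGraph V) (S : Set V) : Set V :=
  {u | u ∉ S ∧ ∃ z ∈ S, G.Adj u z}

/-- `ν_S(u) = min { ω(uz) ∣ z ∈ S ∩ N_G(u) }`. -/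
def nuWt (G : SimpleGraph V) (ω : V → V → ℕ) (S : Set V) (u : V) : ℕ :=
  sInf {w | ∃ z ∈ S, G.Adj u z ∧ w = ω u z}

/-- The graph `G_S`: its vertices are those outside `S`, its edges are those of `G ∖ S`
except that every edge `uz` with `u ∈ N_G(S)` and `ω(uz) ≥ ν_S(u)` is removed. -/
def GSgraph (G : SimpleGraph V) (ω : V → V → ℕ) (S : Set V) : SimpleGraph V where
  Adj a b := G.Adj a b ∧ a ∉ S ∧ b ∉ S ∧
    (a ∈ setNbhd G S → ω a b < nuWt G ω S a) ∧
    (b ∈ setNbhd G S → ω b a < nuWt G ω S b)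
  symm := by
    constructor
    rintro a b ⟨h1, h2, h3, h4, h5⟩
    exact ⟨h1.symm, h3, h2, h5, h4⟩
  loopless := by
    constructor
    rintro a ⟨h, -⟩
    exact G.ne_of_adj h rfl


lemma getVert_injOn' {G : SimpleGraph V} {a b : V} {p : G.Walk a b} (hp : p.IsPath) :
    ∀ i ≤ p.length, ∀ j ≤ p.length, p.getVert i = p.getVert j → i = j := by
  induction p with
  | nil => intro i hi j hj _; simp only [Walk.length_nil, Nat.le_zero] at hi hj; omega
  | cons h q ih =>
    intro i hi j hj hij
    rw [Walk.isPath_def, Walk.support_cons, List.nodup_cons, ← Walk.isPath_def] at hp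
    match i, j with
    | 0, 0 => rfl
    | 0, j+1 =>
      exfalso; apply hp.1
      rw [Walk.getVert_zero, Walk.getVert_cons_succ] at hij
      exact Walk.mem_support_iff_exists_getVert.mpr ⟨j, hij.symm, by simpa using hj⟩
    | i+1, 0 =>
      exfalso; apply hp.1
      rw [Walk.getVert_zero, Walk.getVert_cons_succ] at hij
      exact Walk.mem_support_iff_exists_getVert.mpr ⟨i, hij, by simpa using hi⟩
    | i+1, j+1 =>
      rw [Walk.getVert_cons_succ, Walk.getVert_cons_succ] at hij
      have := ih hp.2 i (by simpa using hi) j (by simpa using hj) hij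
      omega

lemma F1 {G : SimpleGraph V} {v : V} (hu : ∀ a b : V, ∃! p : G.Walk a b, p.IsPath)
    {a b : V} (hab : G.Adj a b) (pa : G.Walk a v) (hpa : pa.IsPath)
    (pb : G.Walk b v) (hpb : pb.IsPath) :
    pa = Walk.cons hab pb ∨ pb = Walk.cons hab.symm pa := by
  classical
  by_cases h : a ∈ pb.support
  · right
    have hQ : (pb.takeUntil a h).IsPath := hpb.takeUntil h
    have hR : (pb.dropUntil a h).IsPath := hpb.dropUntil h
    have hRa : pb.dropUntil a h = pa := (hu a v).unique hR hpa
    have hQe : pb.takeUntil a h = Walk.cons hab.symm Walk.nil :=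
      (hu b a).unique hQ (Path.singleton hab.symm).2
    have := Walk.take_spec pb h
    rw [hRa, hQe] at this
    rw [← this, Walk.cons_append, Walk.nil_append]
  · left
    exact (hu a v).unique hpa (hpb.cons (h := hab) h)

lemma keyLem {V : Type*} [Fintype V] {G : SimpleGraph V} {ω : V → V → ℕ} {v : V}
    (hG : IsIncreasingWeightedTree G ω v)
    {a b w : V} (hab : G.Adj a b) (hwa : G.Adj w a) (hwb : w ≠ b)
    (pb : G.Walk b v) (hpb : pb.IsPath) (hpa : (Walk.cons hab pb).IsPath) :
    ω w a ≤ ω a b := by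
  classical
  have hu : ∀ x y : V, ∃! p : G.Walk x y, p.IsPath := hG.1.existsUnique_path
  obtain ⟨pw, hpw, -⟩ := hu w v
  have hpw_eq : pw = Walk.cons hwa (Walk.cons hab pb) := by
    rcases F1 hu hwa pw hpw _ hpa with h | h
    · exact h
    · exfalso; apply hwb
      have h2 : (Walk.cons hab pb).getVert 1 = w := by
        rw [h]; simp [Walk.getVert_cons_succ]
      simpa [Walk.getVert_cons_succ] using h2.symm
  have pathTo : ∀ u : V, {p : G.Walk u v // p.IsPath} :=
    fun u => ⟨(hu u v).exists.choose, (hu u v).exists.choose_spec⟩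
  set T : Finset V := Finset.univ.filter (fun u => w ∈ (pathTo u).1.support) with hT
  have hwT : w ∈ T := by
    rw [hT, Finset.mem_filter]
    refine ⟨Finset.mem_univ _, ?_⟩
    have : (pathTo w).1 = pw := (hu w v).unique (pathTo w).2 hpw
    rw [this]; exact pw.start_mem_support
  obtain ⟨l, hlT, hmax⟩ := T.exists_max_image (fun u => (pathTo u).1.length) ⟨w, hwT⟩
  set pl : G.Walk l v := (pathTo l).1 with hpl_def
  have hpl : pl.IsPath := (pathTo l).2
  have hwl : w ∈ pl.support := by
    have := Finset.mem_filter.mp hlT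
    exact this.2
  have hspec := Walk.take_spec pl hwl
  have hRw : pl.dropUntil w hwl = pw := (hu w v).unique (hpl.dropUntil hwl) hpw
  set i : ℕ := (pl.takeUntil w hwl).length with hi_def
  have key_getVert : ∀ j : ℕ, pl.getVert (i + j) = pw.getVert j := by
    intro j
    conv_lhs => rw [← hspec]
    rw [Walk.getVert_append, if_neg (by omega), hRw]
    congr 1
    omega
  have hlen_pw : pw.length = pb.length + 2 := by
    rw [hpw_eq]; simp [Walk.length_cons]
  have hklen : pl.length = i + pb.length + 2 := by
    conv_lhs => rw [← hspec]
    rw [Walk.length_append, hRw, hlen_pw]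
    omega
  have hgv0 : pl.getVert i = w := by simpa using key_getVert 0
  have hgv1 : pl.getVert (i + 1) = a := by
    have := key_getVert 1
    rw [hpw_eq] at this
    simpa [Walk.getVert_cons_succ] using this
  have hgv2 : pl.getVert (i + 2) = b := by
    have := key_getVert 2
    rw [hpw_eq] at this
    simpa [Walk.getVert_cons_succ] using this
  have hleaf : IsLeafVertex G (pl.getVert 0) := by
    rw [Walk.getVert_zero]
    refine ⟨pl.getVert 1, ?_, ?_⟩
    · have h0 : (0 : ℕ) < pl.length := by omega
      simpa using pl.adj_getVert_succ h0
    · intro u hlu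
      rcases F1 hu hlu pl hpl (pathTo u).1 (pathTo u).2 with h | h
      · have : pl.getVert 1 = u := by rw [h]; simp [Walk.getVert_cons_succ]
        exact this.symm
      · exfalso
        have huT : u ∈ T := by
          rw [hT, Finset.mem_filter]
          refine ⟨Finset.mem_univ _, ?_⟩
          rw [h, Walk.support_cons]
          exact List.mem_cons_of_mem _ hwl
        have hle := hmax u huT
        have : (pathTo u).1.length = pl.length + 1 := by rw [h, Walk.length_cons]
        omega
  have hsp : IsSimplePathOn G pl.getVert pl.length :=
    ⟨getVert_injOn' hpl, fun j hj => pl.adj_getVert_succ hj⟩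
  have hinc := hG.2 pl.getVert pl.length hsp hleaf pl.getVert_length
  have := hinc i (by omega)
  rwa [hgv0, show i + 1 + 1 = i + 2 from rfl, hgv1, hgv2] at this


/-- Lemma 1.7(1): if `(G_ω, v)` is an increasing weighted tree and `S` is
an independent set of `G`, then `N_G(S)` is an independent set of the graph `G_S`. -/
theorem nbhd_indep_in_GS {V : Type*} [Fintype V]
    (G : SimpleGraph V) (ω : V → V → ℕ)
    (hsym : ∀ a b, ω a b = ω b a) (hpos : ∀ a b, G.Adj a b → 0 < ω a b)
    (v : V) (hG : IsIncreasingWeightedTree G ω v)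
    (S : Set V) (hS : IsIndepSetOn G S) :
    IsIndepSetOn (GSgraph G ω S) (setNbhd G S) := by
  classical
  intro a ha b hb hadj
  obtain ⟨hab, haS, hbS, h4, h5⟩ := hadj
  have hνa := h4 ha
  have hνb := h5 hb
  obtain ⟨-, za, hzaS, hza⟩ := ha
  obtain ⟨-, zb, hzbS, hzb⟩ := hb
  have hne_a : {w | ∃ z ∈ S, G.Adj a z ∧ w = ω a z}.Nonempty := ⟨ω a za, za, hzaS, hza, rfl⟩
  have hne_b : {w | ∃ z ∈ S, G.Adj b z ∧ w = ω b z}.Nonempty := ⟨ω b zb, zb, hzbS, hzb, rfl⟩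
  obtain ⟨wa, hwaS, hwa_adj, hwa_eq⟩ := Nat.sInf_mem hne_a
  obtain ⟨wb, hwbS, hwb_adj, hwb_eq⟩ := Nat.sInf_mem hne_b
  have hu : ∀ x y : V, ∃! p : G.Walk x y, p.IsPath := hG.1.existsUnique_path
  obtain ⟨pa, hpa, -⟩ := hu a v
  obtain ⟨pb, hpb, -⟩ := hu b v
  rcases F1 hu hab pa hpa pb hpb with h | h
  · -- pa = cons hab pb : b is the parent of a; use wa
    have hwab : wa ≠ b := fun hh => hbS (hh ▸ hwaS)
    have hle := keyLem hG hab hwa_adj.symm hwab pb hpb (h ▸ hpa)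
    have hnua : nuWt G ω S a = ω a wa := hwa_eq
    rw [hsym wa a] at hle
    omega
  · -- pb = cons hab.symm pa : a is the parent of b; use wb
    have hwba : wb ≠ a := fun hh => haS (hh ▸ hwbS)
    have hle := keyLem hG hab.symm hwb_adj.symm hwba pa hpa (h ▸ hpb)
    have hnub : nuWt G ω S b = ω b wb := hwb_eq
    rw [hsym wb b] at hle
    omega
end
end

section
/- Let R = K[x_1,…,x_n] be a polynomial ring over a field K, let I ⊆ R be a monomial ideal, and let x^p y^q ∈ 𝒢(I) be a minimal monomial generator of I, where x, y are distinct variables and p, q ≥ 1. Suppose that every f ∈ 𝒢(I) satisfies: (1) if f ≠ x^p y^q then y ∤ f, and (2) if x ∣ f then deg_x(f) ≥ p. Then (I^t : x^p y^q) = I^{t−1} for all integers t ≥ 2. -/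
open MvPolynomial

noncomputable section

variable {n : ℕ} {K : Type*} [Field K]

/-- `I` is a monomial ideal: it is generated by (monic) monomials. -/
def IsMonomialIdeal (I : Ideal (MvPolynomial (Fin n) K)) : Prop :=
  ∃ S : Set (Fin n →₀ ℕ), I = Ideal.span ((fun d => (monomial d (1 : K) : MvPolynomial (Fin n) K)) '' S)

/-- `𝒢(I)`: the unique minimal set of monomial generators of a monomial ideal `I`, i.e. the
monic monomials of `I` which are minimal with respect to divisibility among monomials of `I`. -/
def minimalMonomialGens (I : Ideal (MvPolynomial (Fin n) K)) : Set (MvPolynomial (Fin n) K) :=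
  {f | (∃ d : Fin n →₀ ℕ, f = monomial d (1 : K)) ∧ f ∈ I ∧
    ∀ g : MvPolynomial (Fin n) K,
      (∃ d : Fin n →₀ ℕ, g = monomial d (1 : K)) → g ∈ I → g ∣ f → g = f}

namespace ColonAux

/-- iterated sumset: `sumPow G k` is the set of sums of `k+1` elements of `G`. -/
def sumPow (G : Set (Fin n →₀ ℕ)) : ℕ → Set (Fin n →₀ ℕ)
  | 0 => G
  | k + 1 => {e | ∃ a ∈ G, ∃ b ∈ sumPow G k, e = a + b}

lemma span_sumPow (G : Set (Fin n →₀ ℕ)) (k : ℕ) :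
    (Ideal.span ((fun d => (monomial d (1 : K) : MvPolynomial (Fin n) K)) '' G)) ^ (k + 1)
      = Ideal.span ((fun d => (monomial d (1 : K) : MvPolynomial (Fin n) K)) '' sumPow G k) := by
  induction k with
  | zero => simp [sumPow]
  | succ k ih =>
    rw [pow_succ', ih, Ideal.span_mul_span']
    congr 1
    ext f
    constructor
    · rw [Set.mem_mul]
      rintro ⟨x, ⟨a, ha, rfl⟩, y, ⟨b, hb, rfl⟩, rfl⟩
      exact ⟨a + b, ⟨a, ha, b, hb, rfl⟩, by rw [monomial_mul, one_mul]⟩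
    · rintro ⟨e, ⟨a, ha, b, hb, rfl⟩, rfl⟩
      rw [Set.mem_mul]
      exact ⟨monomial a 1, ⟨a, ha, rfl⟩, monomial b 1, ⟨b, hb, rfl⟩,
        by rw [monomial_mul, one_mul]⟩

lemma mem_sumPow_iff {G : Set (Fin n →₀ ℕ)} {k : ℕ} {e : Fin n →₀ ℕ} :
    e ∈ sumPow G k ↔
      ∃ L : List (Fin n →₀ ℕ), L.length = k + 1 ∧ (∀ d ∈ L, d ∈ G) ∧ L.sum = e := by
  induction k generalizing e with
  | zero =>
    constructor
    · intro h
      exact ⟨[e], rfl, by simpa [sumPow] using h, by simp⟩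
    · rintro ⟨L, hlen, hmem, rfl⟩
      match L, hlen with
      | [a], _ => simpa [sumPow] using hmem a (by simp)
  | succ k ih =>
    constructor
    · rintro ⟨a, ha, b, hb, rfl⟩
      obtain ⟨L, hlen, hmem, rfl⟩ := ih.mp hb
      refine ⟨a :: L, by simp [hlen], ?_, by simp⟩
      rintro d hd
      rcases List.mem_cons.mp hd with rfl | hd
      · exact ha
      · exact hmem d hd
    · rintro ⟨L, hlen, hmem, rfl⟩
      match L, hlen with
      | a :: L', hlen =>
        refine ⟨a, hmem a (by simp), L'.sum, ih.mpr ⟨L', by simpa using hlen,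
          fun d hd => hmem d (List.mem_cons_of_mem _ hd), rfl⟩, by simp⟩

lemma sum_apply_list (L : List (Fin n →₀ ℕ)) (l : Fin n) :
    L.sum l = (L.map (fun d => d l)).sum := by
  exact map_list_sum (Finsupp.applyAddHom l) L

/-- The key combinatorial lemma. -/
lemma key {G : Set (Fin n →₀ ℕ)} {i j : Fin n} (hij : i ≠ j) {p q : ℕ}
    (hj0 : ∀ d ∈ G, d ≠ Finsupp.single i p + Finsupp.single j q → d j = 0)
    (hip : ∀ d ∈ G, d i ≠ 0 → p ≤ d i)
    {k : ℕ} {c e : Fin n →₀ ℕ} (he : e ∈ sumPow G (k + 1))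
    (hle : e ≤ c + (Finsupp.single i p + Finsupp.single j q)) :
    ∃ e' ∈ sumPow G k, e' ≤ c := by
  classical
  set μ : Fin n →₀ ℕ := Finsupp.single i p + Finsupp.single j q with hμdef
  have hμi : μ i = p := by simp [hμdef, Finsupp.single_apply, hij, Ne.symm hij]
  have hμl : ∀ l : Fin n, l ≠ i → l ≠ j → μ l = 0 := by
    intro l hli hlj
    simp [hμdef, Finsupp.single_apply, Ne.symm hli, Ne.symm hlj]
  obtain ⟨L, hlen, hmem, rfl⟩ := mem_sumPow_iff.mp he
  have hle' : ∀ l, L.sum l ≤ c l + μ l := fun l => by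
    have := hle l
    simpa using this
  by_cases hμL : μ ∈ L
  · -- drop the copy of μ
    have hperm : List.Perm L (μ :: L.erase μ) := List.perm_cons_erase hμL
    have hsum : L.sum = μ + (L.erase μ).sum := by
      rw [hperm.sum_eq]; simp
    refine ⟨(L.erase μ).sum, mem_sumPow_iff.mpr ⟨L.erase μ, ?_,
      fun d hd => hmem d (List.mem_of_mem_erase hd), rfl⟩, ?_⟩
    · rw [List.length_erase_of_mem hμL, hlen]
      omega
    · intro l
      have h1 := hle' l
      rw [hsum] at h1
      simp only [Finsupp.add_apply] at h1
      omega
  · -- no copy of μ: every element has j-coordinate 0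
    have hjz : ∀ d ∈ L, d j = 0 := fun d hd =>
      hj0 d (hmem d hd) (fun h => hμL (h ▸ hd))
    have hsumj : L.sum j = 0 := by
      rw [sum_apply_list]
      exact List.sum_eq_zero (by simpa using hjz)
    by_cases hx : ∃ d ∈ L, d i ≠ 0
    · obtain ⟨d, hdL, hdi⟩ := hx
      have hdp : p ≤ d i := hip d (hmem d hdL) hdi
      have hperm : List.Perm L (d :: L.erase d) := List.perm_cons_erase hdL
      have hsum : L.sum = d + (L.erase d).sum := by
        rw [hperm.sum_eq]; simp
      refine ⟨(L.erase d).sum, mem_sumPow_iff.mpr ⟨L.erase d, ?_,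
        fun x hx' => hmem x (List.mem_of_mem_erase hx'), rfl⟩, ?_⟩
      · rw [List.length_erase_of_mem hdL, hlen]
        omega
      · intro l
        by_cases hli : l = i
        · subst hli
          have h1 := hle' l
          rw [hsum] at h1
          simp only [Finsupp.add_apply] at h1
          rw [hμi] at h1
          omega
        · by_cases hlj : l = j
          · subst hlj
            have h1 : (L.erase d).sum l + d l = L.sum l := by
              rw [hsum]; simp only [Finsupp.add_apply]; omega
            have := hsumj
            omega
          · have h1 := hle' l
            rw [hsum, hμl l hli hlj] at h1
            simp only [Finsupp.add_apply] at h1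
            omega
    · -- all i-coordinates are 0, so L.sum ≤ c; drop the head
      push_neg at hx
      have hsumi : L.sum i = 0 := by
        rw [sum_apply_list]
        exact List.sum_eq_zero (by simpa using hx)
      have hsc : L.sum ≤ c := by
        intro l
        by_cases hli : l = i
        · subst hli; simp [hsumi]
        · by_cases hlj : l = j
          · subst hlj; simp [hsumj]
          · have h1 := hle' l
            rw [hμl l hli hlj] at h1
            omega
      match L, hlen with
      | a :: L', hlen =>
        refine ⟨L'.sum, mem_sumPow_iff.mpr ⟨L', by simpa using hlen,
          fun x hx' => hmem x (List.mem_cons_of_mem _ hx'), rfl⟩, ?_⟩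
        refine le_trans ?_ hsc
        simp only [List.sum_cons]
        exact le_add_self

lemma exists_min_gen (I : Ideal (MvPolynomial (Fin n) K)) {d : Fin n →₀ ℕ}
    (hd : (monomial d (1 : K)) ∈ I) :
    ∃ e ≤ d, (monomial e (1 : K)) ∈ minimalMonomialGens I := by
  set T : Set (Fin n →₀ ℕ) := {c | c ≤ d ∧ (monomial c (1 : K)) ∈ I} with hT
  have hne : d ∈ T := ⟨le_rfl, hd⟩
  obtain ⟨e, heT, hmin⟩ := (wellFounded_lt (α := Fin n →₀ ℕ)).has_min T ⟨d, hne⟩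
  refine ⟨e, heT.1, ⟨e, rfl⟩, heT.2, ?_⟩
  rintro g ⟨c, rfl⟩ hgI hdvd
  have hce : c ≤ e := monomial_one_dvd_monomial_one.mp hdvd
  rcases eq_or_lt_of_le hce with h | h
  · rw [h]
  · exact absurd h (hmin c ⟨hce.trans heT.1, hgI⟩)

lemma span_gens (I : Ideal (MvPolynomial (Fin n) K)) (hI : IsMonomialIdeal I) :
    I = Ideal.span ((fun d => (monomial d (1 : K) : MvPolynomial (Fin n) K)) ''
      {d : Fin n →₀ ℕ | monomial d (1 : K) ∈ minimalMonomialGens I}) := by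
  apply le_antisymm
  · obtain ⟨S, hS⟩ := hI
    conv_lhs => rw [hS]
    rw [Ideal.span_le]
    rintro _ ⟨d, hdS, rfl⟩
    have hdI : (monomial d (1 : K)) ∈ I := by
      rw [hS]; exact Ideal.subset_span ⟨d, hdS, rfl⟩
    obtain ⟨e, hed, hgen⟩ := exists_min_gen I hdI
    have hdvd : (monomial e (1 : K) : MvPolynomial (Fin n) K) ∣ monomial d 1 :=
      monomial_one_dvd_monomial_one.mpr hed
    obtain ⟨g, hg⟩ := hdvd
    show (monomial d (1 : K) : MvPolynomial (Fin n) K) ∈ _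
    rw [hg]
    exact Ideal.mul_mem_right _ _ (Ideal.subset_span ⟨e, hgen, rfl⟩)
  · rw [Ideal.span_le]
    rintro _ ⟨d, hd, rfl⟩
    exact hd.2.1

end ColonAux

/-- Lemma 2.1: let `I` be a monomial ideal and `x^p y^q ∈ 𝒢(I)` with
`p, q ≥ 1` and `x = X i`, `y = X j` distinct variables.  If every `f ∈ 𝒢(I)` satisfies
(1) `f ≠ x^p y^q → y ∤ f` and (2) `x ∣ f → deg_x f ≥ p`, then `(I^t : x^p y^q) = I^{t-1}`
for all `t ≥ 2`. -/
theorem colon_power_eq (I : Ideal (MvPolynomial (Fin n) K)) (hI : IsMonomialIdeal I)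
    (i j : Fin n) (hij : i ≠ j) (p q : ℕ) (hp : 1 ≤ p) (hq : 1 ≤ q)
    (hgen : (X i ^ p * X j ^ q : MvPolynomial (Fin n) K) ∈ minimalMonomialGens I)
    (h1 : ∀ f ∈ minimalMonomialGens I, f ≠ X i ^ p * X j ^ q → ¬ (X j ∣ f))
    (h2 : ∀ f ∈ minimalMonomialGens I, (X i ∣ f) → (X i ^ p ∣ f))
    (t : ℕ) (ht : 2 ≤ t) :
    (I ^ t).colon (Ideal.span {(X i ^ p * X j ^ q : MvPolynomial (Fin n) K)}) = I ^ (t - 1) := by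
  classical
  set μ : Fin n →₀ ℕ := Finsupp.single i p + Finsupp.single j q with hμdef
  have hmono : (X i ^ p * X j ^ q : MvPolynomial (Fin n) K) = monomial μ 1 := by
    rw [X_pow_eq_monomial, X_pow_eq_monomial, monomial_mul, one_mul]
  set G : Set (Fin n →₀ ℕ) := {d : Fin n →₀ ℕ | monomial d (1 : K) ∈ minimalMonomialGens I}
    with hGdef
  have hIG : I = Ideal.span ((fun d => (monomial d (1 : K) : MvPolynomial (Fin n) K)) '' G) :=
    ColonAux.span_gens I hI
  have hj0 : ∀ d ∈ G, d ≠ μ → d j = 0 := by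
    intro d hd hne
    by_contra h
    refine h1 _ hd ?_ (X_dvd_monomial.mpr (Or.inr h))
    rw [hmono]
    intro heq
    exact hne (by
      have := monomial_left_injective (one_ne_zero (α := K)) heq
      exact this)
  have hip : ∀ d ∈ G, d i ≠ 0 → p ≤ d i := by
    intro d hd hdi
    have hx := h2 _ hd (X_dvd_monomial.mpr (Or.inr hdi))
    rw [X_pow_eq_monomial] at hx
    have := monomial_one_dvd_monomial_one.mp hx
    simpa using Finsupp.single_le_iff.mp this
  obtain ⟨k, rfl⟩ : ∃ k, t = k + 2 := ⟨t - 2, by omega⟩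
  have hsub : k + 2 - 1 = k + 1 := rfl
  have hpow_t : I ^ (k + 2) =
      Ideal.span ((fun d => (monomial d (1 : K) : MvPolynomial (Fin n) K)) ''
        ColonAux.sumPow G (k + 1)) := by
    rw [hIG]; exact ColonAux.span_sumPow G (k + 1)
  have hpow_t1 : I ^ (k + 1) =
      Ideal.span ((fun d => (monomial d (1 : K) : MvPolynomial (Fin n) K)) ''
        ColonAux.sumPow G k) := by
    rw [hIG]; exact ColonAux.span_sumPow G k
  ext f
  rw [Ideal.mem_colon_span_singleton, hsub]
  constructor
  · intro hf
    rw [hmono, hpow_t, mem_ideal_span_monomial_image] at hf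
    rw [hpow_t1, mem_ideal_span_monomial_image]
    intro c hc
    have hc' : c + μ ∈ (f * monomial μ (1 : K)).support := by
      rw [mem_support_iff, coeff_mul_monomial, mul_one]
      exact mem_support_iff.mp hc
    obtain ⟨e, he, hle⟩ := hf _ hc'
    exact ColonAux.key hij hj0 hip he hle
  · intro hf
    have hm : (X i ^ p * X j ^ q : MvPolynomial (Fin n) K) ∈ I := hgen.2.1
    have := Ideal.mul_mem_mul hf hm
    rwa [← pow_succ] at this
end
end

section
/- Let G_ω be an increasing weighted tree with vertex set {x_1,…,x_n}, n ≥ 2, and let I(G_ω) ⊆ R = K[x_1,…,x_n] be its weighted edge ideal. Then the maximal graded ideal 𝔪 = (x_1,…,x_n) is not an associated prime of I(G_ω)^t for any t ≥ 1. -/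
open SimpleGraph

noncomputable section

variable {V : Type*}

open MvPolynomial

/-- The weighted edge ideal `I(G_ω) = ((x_i x_j)^{ω(x_i x_j)} ∣ x_i x_j ∈ E(G))`. -/
def weightedEdgeIdeal (n : ℕ) (K : Type*) [Field K]
    (G : SimpleGraph (Fin n)) (ω : Fin n → Fin n → ℕ) : Ideal (MvPolynomial (Fin n) K) :=
  Ideal.span {f | ∃ i j : Fin n, G.Adj i j ∧ f = (X i * X j) ^ ω i j}

/-- The maximal graded ideal `𝔪 = (x_1, …, x_n)`. -/
def maxGradedIdeal (n : ℕ) (K : Type*) [Field K] : Ideal (MvPolynomial (Fin n) K) :=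
  Ideal.span (Set.range (X : Fin n → MvPolynomial (Fin n) K))

/-- `μ(x) = max { ω(xy) ∣ y ∈ N_G(x) }`. -/
def muWt (G : SimpleGraph V) (ω : V → V → ℕ) (x : V) : ℕ :=
  sSup {w | ∃ y, G.Adj x y ∧ w = ω x y}

namespace WtAux
variable {n : ℕ}



variable {n : ℕ}

/-- multiplicity vector `y` of edges `(x, par x)`; load at vertex `z`. -/
def load (par : Fin n → Fin n) (wt : Fin n → ℕ) (y : Fin n → ℕ) (z : Fin n) : ℕ :=
  wt z * y z + ∑ x ∈ Finset.univ.filter (fun x => par x = z), wt x * y x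

def dd (c : Fin n) (m : ℕ) : Fin n → ℕ := fun x => if x = c then m else 0

def Cert (par : Fin n → Fin n) (wt : Fin n → ℕ) (v : Fin n) (A : Finset (Fin n))
    (t : ℕ) (d : Fin n → ℕ) : Prop :=
  ∃ y : Fin n → ℕ, (∀ x, y x ≠ 0 → x ∈ A ∧ x ≠ v) ∧ (∑ x, y x) = t ∧
    ∀ z, load par wt y z ≤ d z

variable {par : Fin n → Fin n} {wt : Fin n → ℕ}

lemma load_add (y y' : Fin n → ℕ) (z : Fin n) :
    load par wt (fun x => y x + y' x) z = load par wt y z + load par wt y' z := by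
  simp [load, Nat.mul_add, Finset.sum_add_distrib]; ring

lemma load_mono {y y' : Fin n → ℕ} (h : ∀ x, y x ≤ y' x) (z : Fin n) :
    load par wt y z ≤ load par wt y' z := by
  refine Nat.add_le_add (Nat.mul_le_mul_left _ (h z)) ?_
  exact Finset.sum_le_sum fun x _ => Nat.mul_le_mul_left _ (h x)

lemma load_dd (c : Fin n) (m : ℕ) (z : Fin n) :
    load par wt (dd c m) z
      = (if z = c then wt c * m else 0) + (if par c = z then wt c * m else 0) := by
  unfold load dd
  congr 1
  · by_cases h : z = c
    · subst h; simp
    · simp [h]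
  · have h1 : ∀ x ∈ Finset.univ.filter (fun x => par x = z),
        wt x * (if x = c then m else 0) = if x = c then wt c * m else 0 := by
      intro x _; split <;> simp_all
    rw [Finset.sum_congr rfl h1, Finset.sum_ite_eq' (Finset.univ.filter (fun x => par x = z)) c
      (fun _ => wt c * m)]
    simp [Finset.mem_filter]


lemma exists_ne_zero_of_sum_ne_zero {y : Fin n → ℕ} (h : ∑ x, y x ≠ 0) :
    ∃ x, y x ≠ 0 := by
  by_contra hc; push_neg at hc
  exact h (Finset.sum_eq_zero fun x _ => hc x)

lemma sum_update_sub_one {y : Fin n → ℕ} {x₀ : Fin n} (h : y x₀ ≠ 0) :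
    (∑ x, Function.update y x₀ (y x₀ - 1) x) + 1 = ∑ x, y x := by
  rw [Finset.sum_update_of_mem (Finset.mem_univ x₀), Finset.sdiff_singleton_eq_erase]
  have h2 : y x₀ + ∑ x ∈ Finset.univ.erase x₀, y x = ∑ x, y x :=
    Finset.add_sum_erase _ _ (Finset.mem_univ x₀)
  omega

lemma eq_update_add_dd {y : Fin n → ℕ} {x₀ : Fin n} (h : y x₀ ≠ 0) :
    y = fun x => Function.update y x₀ (y x₀ - 1) x + (if x = x₀ then 1 else 0) := by
  funext x
  by_cases hx : x = x₀
  · subst hx; simp [Function.update_self]; omega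
  · simp [Function.update_of_ne hx, hx]

/-- trimming lemma: we can decrease `y` to bring the load at `u` below `target`,
removing at most `m` units, provided each unit at `u` weighs at least `w`. -/
lemma trim (par : Fin n → Fin n) (wt : Fin n → ℕ) (u : Fin n) (w target : ℕ) :
    ∀ (m : ℕ) (y : Fin n → ℕ), (∀ x, y x ≠ 0 → w ≤ wt x) →
    load par wt y u ≤ target + m * w →
    ∃ y' : Fin n → ℕ, (∀ x, y' x ≤ y x) ∧ (∑ x, y x) ≤ (∑ x, y' x) + m ∧
      load par wt y' u ≤ target := by
  intro m
  induction m with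
  | zero => intro y _ hl; exact ⟨y, fun x => le_refl _, by omega, by simpa using hl⟩
  | succ m ih =>
    intro y hw hl
    by_cases hle : load par wt y u ≤ target
    · exact ⟨y, fun x => le_refl _, by omega, hle⟩
    push_neg at hle
    -- find an edge with positive multiplicity contributing to the load at u
    have hpos : 0 < load par wt y u := lt_of_le_of_lt (Nat.zero_le _) hle
    have hx₀ : ∃ x₀, y x₀ ≠ 0 ∧ (x₀ = u ∨ par x₀ = u) := by
      by_contra hc; push_neg at hc
      have h1 : wt u * y u = 0 := by
        by_cases h : y u = 0
        · simp [h]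
        · exact absurd rfl (hc u h).1
      have h2 : ∑ x ∈ Finset.univ.filter (fun x => par x = u), wt x * y x = 0 := by
        refine Finset.sum_eq_zero fun x hx => ?_
        by_cases h : y x = 0
        · simp [h]
        · exact absurd (Finset.mem_filter.mp hx).2 (hc x h).2
      rw [load, h1, h2] at hpos; omega
    obtain ⟨x₀, hy₀, hor⟩ := hx₀
    set y₁ := Function.update y x₀ (y x₀ - 1) with hy₁
    have hdecomp := eq_update_add_dd hy₀
    have hload : load par wt y u = load par wt y₁ u + load par wt (dd x₀ 1) u := by
      conv_lhs => rw [hdecomp]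
      exact load_add _ _ _
    have hwx₀ : w ≤ wt x₀ := hw x₀ hy₀
    have hddu : wt x₀ ≤ load par wt (dd x₀ 1) u := by
      rw [load_dd]
      rcases hor with h | h
      · simp [h.symm]
      · simp [h]
    have hl1 : load par wt y₁ u ≤ target + m * w := by
      have hb : (m + 1) * w = m * w + w := by ring
      omega
    have hw1 : ∀ x, y₁ x ≠ 0 → w ≤ wt x := by
      intro x hx
      apply hw
      by_cases hxx : x = x₀
      · subst hxx; exact hy₀
      · rwa [hy₁, Function.update_of_ne hxx] at hx
    obtain ⟨y', h1, h2, h3⟩ := ih y₁ hw1 hl1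
    refine ⟨y', fun x => le_trans (h1 x) ?_, ?_, h3⟩
    · by_cases hxx : x = x₀
      · subst hxx; rw [hy₁, Function.update_self]; omega
      · rw [hy₁, Function.update_of_ne hxx]
    · have := sum_update_sub_one hy₀
      rw [hy₁] at *
      omega

lemma shrink (s : ℕ) : ∀ (k : ℕ) (y : Fin n → ℕ), ∑ x, y x = s + k →
    ∃ y' : Fin n → ℕ, (∀ x, y' x ≤ y x) ∧ ∑ x, y' x = s := by
  intro k
  induction k with
  | zero => intro y h; exact ⟨y, fun x => le_refl _, by omega⟩
  | succ k ih =>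
    intro y h
    have hy : ∑ x, y x ≠ 0 := by omega
    obtain ⟨x₀, hx₀⟩ := exists_ne_zero_of_sum_ne_zero hy
    have hsum := sum_update_sub_one hx₀
    obtain ⟨y', h1, h2⟩ := ih (Function.update y x₀ (y x₀ - 1)) (by omega)
    refine ⟨y', fun x => le_trans (h1 x) ?_, h2⟩
    by_cases hxx : x = x₀
    · subst hxx; rw [Function.update_self]; omega
    · rw [Function.update_of_ne hxx]

lemma load_eq_of_no_child (par : Fin n → Fin n) (wt : Fin n → ℕ) {y : Fin n → ℕ} {l : Fin n}
    (h : ∀ x, y x ≠ 0 → par x ≠ l) : load par wt y l = wt l * y l := by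
  unfold load
  have hz : ∑ x ∈ Finset.univ.filter (fun x => par x = l), wt x * y x = 0 := by
    refine Finset.sum_eq_zero fun x hx => ?_
    by_cases hy : y x = 0
    · simp [hy]
    · exact absurd (Finset.mem_filter.mp hx).2 (h x hy)
  rw [hz, Nat.add_zero]

lemma sum_dd (c : Fin n) (m : ℕ) : ∑ x, dd c m x = m := by
  simp [dd, Finset.sum_ite_eq']

theorem star (par : Fin n → Fin n) (wt rk : Fin n → ℕ) (v : Fin n) (A : Finset (Fin n)) :
    v ∈ A →
    (∀ x ∈ A, x ≠ v → par x ∈ A) →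
    (∀ x ∈ A, x ≠ v → rk (par x) < rk x) →
    (∀ x ∈ A, x ≠ v → par x ≠ v → wt x ≤ wt (par x)) →
    (∀ x ∈ A, x ≠ v → 1 ≤ wt x) →
    ∀ (t : ℕ), 1 ≤ t → ∀ (d : Fin n → ℕ),
    (∀ x ∈ A, Cert par wt v A t (fun z => d z + dd x 1 z)) →
    Cert par wt v A t d := by
  induction A using Finset.strongInduction with
  | _ A ih =>
  intro hv hpar hrk hinc hwt t ht d hyp
  by_cases hA : ∃ x ∈ A, x ≠ v
  case neg =>
    push_neg at hA
    obtain ⟨y, hsupp, hsum, -⟩ := hyp v hv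
    have hy0 : ∀ x, y x = 0 := by
      intro x
      by_contra h
      exact (hsupp x h).2 (hA x (hsupp x h).1)
    rw [Finset.sum_eq_zero (fun x _ => hy0 x)] at hsum
    omega
  case pos =>
  obtain ⟨x₁, hx₁A, hx₁v⟩ := hA
  -- select a minimum-weight leaf
  have hS : (A.erase v).Nonempty := ⟨x₁, Finset.mem_erase.mpr ⟨hx₁v, hx₁A⟩⟩
  obtain ⟨b, hbS, hbmin⟩ := Finset.exists_min_image (A.erase v) wt hS
  have hT : ((A.erase v).filter (fun x => wt x = wt b)).Nonempty :=
    ⟨b, Finset.mem_filter.mpr ⟨hbS, rfl⟩⟩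
  obtain ⟨l, hlT, hlmax⟩ :=
    Finset.exists_max_image ((A.erase v).filter (fun x => wt x = wt b)) rk hT
  obtain ⟨hlS, hlwt⟩ := Finset.mem_filter.mp hlT
  have hlv : l ≠ v := (Finset.mem_erase.mp hlS).1
  have hlA : l ∈ A := (Finset.mem_erase.mp hlS).2
  have hwmin : ∀ x ∈ A, x ≠ v → wt l ≤ wt x := by
    intro x hx hxv
    have h1 := hbmin x (Finset.mem_erase.mpr ⟨hxv, hx⟩)
    omega
  have hleaf : ∀ c ∈ A, c ≠ v → par c ≠ l := by
    intro c hc hcv hpc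
    have hpcv : par c ≠ v := by rw [hpc]; exact hlv
    have h1 : wt c ≤ wt l := by
      have := hinc c hc hcv hpcv
      rwa [hpc] at this
    have h2 : wt c = wt b := by
      have := hbmin c (Finset.mem_erase.mpr ⟨hcv, hc⟩)
      omega
    have h3 : rk c ≤ rk l := hlmax c (Finset.mem_filter.mpr ⟨Finset.mem_erase.mpr ⟨hcv, hc⟩, h2⟩)
    have h4 : rk (par c) < rk c := hrk c hc hcv
    rw [hpc] at h4
    omega
  have huA : par l ∈ A := hpar l hlA hlv
  have hrkul : rk (par l) < rk l := hrk l hlA hlv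
  have hlu : par l ≠ l := fun h => by rw [h] at hrkul; omega
  -- the certificate at l
  obtain ⟨yl, hyls, hylt, hyll⟩ := hyp l hlA
  have hchildl : ∀ x, yl x ≠ 0 → par x ≠ l := fun x hx => hleaf x (hyls x hx).1 (hyls x hx).2
  have hloadyl : load par wt yl l = wt l * yl l := load_eq_of_no_child par wt hchildl
  have hwk1 : wt l * yl l ≤ d l + 1 := by
    have h1 : load par wt yl l ≤ d l + dd l 1 l := hyll l
    rw [hloadyl] at h1
    simpa [dd] using h1
  by_cases hcase : wt l * yl l ≤ d l
  · -- the certificate at l already works for d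
    refine ⟨yl, hyls, hylt, fun z => ?_⟩
    by_cases hz : z = l
    · rw [hz, hloadyl]; exact hcase
    · have h1 : load par wt yl z ≤ d z + dd l 1 z := hyll z
      simpa [dd, hz] using h1
  push_neg at hcase
  set k := yl l with hk
  have htight : wt l * k = d l + 1 := by omega
  have hk1 : 1 ≤ k := by
    by_contra h
    have hk0 : k = 0 := by omega
    rw [hk0, Nat.mul_zero] at htight; omega
  have hw1 : 1 ≤ wt l := hwt l hlA hlv
  -- d (par l) ≥ wt l * k
  have hdu : wt l * k ≤ d (par l) := by
    have h1 : wt l * yl l ≤ ∑ x ∈ Finset.univ.filter (fun x => par x = par l), wt x * yl x :=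
      Finset.single_le_sum (f := fun x => wt x * yl x) (fun i _ => Nat.zero_le _)
        (Finset.mem_filter.mpr ⟨Finset.mem_univ l, rfl⟩)
    have h2 : load par wt yl (par l) ≤ d (par l) + dd l 1 (par l) := hyll (par l)
    have h3 : dd l 1 (par l) = 0 := by simp [dd, hlu]
    rw [h3, add_zero] at h2
    unfold load at h2
    rw [← hk] at h1
    omega
  set κ := k - 1 with hκ
  have hkκ : k = κ + 1 := by omega
  have hκw : κ * wt l + wt l = wt l * k := by rw [hkκ]; ring
  by_cases hbt : t ≤ κ
  · -- t copies of the leaf edge work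
    refine ⟨dd l t, ?_, sum_dd l t, fun z => ?_⟩
    · intro x hx
      have hxl : x = l := by
        by_contra h; rw [dd, if_neg h] at hx; exact hx rfl
      rw [hxl]; exact ⟨hlA, hlv⟩
    · rw [load_dd]
      have hmul : wt l * t + wt l ≤ wt l * k := by
        have h1 : wt l * t ≤ wt l * κ := Nat.mul_le_mul_left _ hbt
        have h2 : wt l * κ + wt l = wt l * k := by rw [hkκ]; ring
        omega
      by_cases hz : z = l
      · rw [if_pos hz, if_neg (fun h : par l = z => hlu (h.trans hz))]
        rw [hz]
        omega
      · rw [if_neg hz]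
        by_cases hz2 : par l = z
        · rw [if_pos hz2, ← hz2]
          omega
        · rw [if_neg hz2]; omega
  push_neg at hbt  -- κ < t
  -- the reduced problem on A' = A.erase l, with t' = t - κ and capacity d'
  set A' := A.erase l with hA'
  set d' := fun z => if z = par l then d (par l) - κ * wt l else d z with hd'
  have hd'u : d' (par l) = d (par l) - κ * wt l := by rw [hd']; simp
  have hd'z : ∀ z, z ≠ par l → d' z = d z := by
    intro z hz; rw [hd']; simp [hz]
  have hyp' : ∀ x ∈ A', Cert par wt v A' (t - κ) (fun z => d' z + dd x 1 z) := by
    intro x hx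
    have hxl : x ≠ l := (Finset.mem_erase.mp hx).1
    have hxA : x ∈ A := (Finset.mem_erase.mp hx).2
    obtain ⟨y, hs, hsum2, hld⟩ := hyp x hxA
    set kx := y l with hkx
    have hchild : ∀ a, y a ≠ 0 → par a ≠ l := fun a ha => hleaf a (hs a ha).1 (hs a ha).2
    have hldl : load par wt y l = wt l * kx := load_eq_of_no_child par wt hchild
    have hkxκ : kx ≤ κ := by
      have h1 : load par wt y l ≤ d l + dd x 1 l := hld l
      rw [hldl] at h1
      have h2 : dd x 1 l = 0 := by simp [dd, Ne.symm hxl]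
      rw [h2, add_zero] at h1
      have h4 : wt l * kx < wt l * k := by omega
      have h5 := Nat.lt_of_mul_lt_mul_left h4
      omega
    set y0 := Function.update y l 0 with hy0
    have hdecomp : y = fun z => y0 z + dd l kx z := by
      funext z
      by_cases hz : z = l
      · rw [hz, hy0]; simp [dd, Function.update_self, hkx]
      · rw [hy0]; simp [dd, Function.update_of_ne hz, hz]
    have hloaddec : ∀ z, load par wt y z = load par wt y0 z + load par wt (dd l kx) z := by
      intro z; conv_lhs => rw [hdecomp]
      exact load_add _ _ _
    have hsum0 : ∑ z, y0 z + kx = t := by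
      have h1 : ∑ z, y z = ∑ z, y0 z + ∑ z, dd l kx z := by
        conv_lhs => rw [hdecomp]
        exact Finset.sum_add_distrib
      rw [sum_dd] at h1
      omega
    -- trim the load at u := par l
    have hddu : load par wt (dd l kx) (par l) = wt l * kx := by
      rw [load_dd, if_neg hlu, if_pos rfl]
      omega
    have hldu : load par wt y0 (par l) ≤ (d' (par l) + dd x 1 (par l)) + (κ - kx) * wt l := by
      have h1 : load par wt y (par l) ≤ d (par l) + dd x 1 (par l) := hld (par l)
      rw [hloaddec (par l), hddu] at h1
      have h2 : (κ - kx) * wt l + kx * wt l = κ * wt l := by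
        rw [← Nat.add_mul, Nat.sub_add_cancel hkxκ]
      have h4 : κ * wt l ≤ d (par l) := by omega
      have h5 : kx * wt l = wt l * kx := Nat.mul_comm _ _
      omega
    have hwts : ∀ z, y0 z ≠ 0 → wt l ≤ wt z := by
      intro z hz
      by_cases hzl : z = l
      · rw [hzl, hy0, Function.update_self] at hz; omega
      · rw [hy0, Function.update_of_ne hzl] at hz
        exact hwmin z (hs z hz).1 (hs z hz).2
    obtain ⟨y', hy'le, hy'sum, hy'load⟩ :=
      trim par wt (par l) (wt l) (d' (par l) + dd x 1 (par l)) (κ - kx) y0 hwts hldu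
    have hy'sum2 : t - κ ≤ ∑ z, y' z := by omega
    obtain ⟨y'', hy''le, hy''sum⟩ := shrink (t - κ) (∑ z, y' z - (t - κ)) y' (by omega)
    have hy''y : ∀ z, y'' z ≤ y0 z := fun z => le_trans (hy''le z) (hy'le z)
    have hy''supp : ∀ z, y'' z ≠ 0 → z ∈ A ∧ z ≠ v ∧ z ≠ l := by
      intro z hz
      have hz0 : y0 z ≠ 0 := by
        have := hy''y z; intro h; rw [h] at this; omega
      have hzl : z ≠ l := by
        intro h; rw [h, hy0, Function.update_self] at hz0; exact hz0 rfl
      rw [hy0, Function.update_of_ne hzl] at hz0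
      exact ⟨(hs z hz0).1, (hs z hz0).2, hzl⟩
    refine ⟨y'', ?_, hy''sum, fun z => ?_⟩
    · intro z hz
      obtain ⟨h1, h2, h3⟩ := hy''supp z hz
      exact ⟨Finset.mem_erase.mpr ⟨h3, h1⟩, h2⟩
    · show load par wt y'' z ≤ d' z + dd x 1 z
      by_cases hzu : z = par l
      · rw [hzu]
        have hm2 : load par wt y'' (par l) ≤ load par wt y' (par l) := load_mono hy''le (par l)
        omega
      by_cases hzl : z = l
      · rw [hzl]
        have hnc : ∀ a, y'' a ≠ 0 → par a ≠ l := by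
          intro a ha
          obtain ⟨h1, h2, -⟩ := hy''supp a ha
          exact hleaf a h1 h2
        have h5 : load par wt y'' l = wt l * y'' l := load_eq_of_no_child par wt hnc
        have hyl0 : y'' l = 0 := by
          have h6 := hy''y l
          rw [hy0, Function.update_self] at h6
          omega
        rw [h5, hyl0, Nat.mul_zero]
        exact Nat.zero_le _
      · have hm2 : load par wt y'' z ≤ load par wt y' z := load_mono hy''le z
        have hm1 : load par wt y' z ≤ load par wt y0 z := load_mono hy'le z
        have h1 : load par wt y z ≤ d z + dd x 1 z := hld z
        have h2 : load par wt (dd l kx) z = 0 := by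
          rw [load_dd, if_neg hzl, if_neg (fun h : par l = z => hzu h.symm)]
        have h3 := hloaddec z
        have h4 : d' z = d z := hd'z z hzu
        omega
  -- apply the induction hypothesis
  have hssub : A' ⊂ A := Finset.erase_ssubset hlA
  have hvA' : v ∈ A' := Finset.mem_erase.mpr ⟨Ne.symm hlv, hv⟩
  obtain ⟨yf, hfs, hft, hfl⟩ :=
    ih A' hssub hvA'
      (fun x hx hxv => Finset.mem_erase.mpr
        ⟨hleaf x (Finset.mem_erase.mp hx).2 hxv, hpar x (Finset.mem_erase.mp hx).2 hxv⟩)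
      (fun x hx hxv => hrk x (Finset.mem_erase.mp hx).2 hxv)
      (fun x hx hxv => hinc x (Finset.mem_erase.mp hx).2 hxv)
      (fun x hx hxv => hwt x (Finset.mem_erase.mp hx).2 hxv)
      (t - κ) (by omega) d' hyp'
  -- assemble the final certificate
  refine ⟨fun z => yf z + dd l κ z, ?_, ?_, fun z => ?_⟩
  · intro z hz
    have hz' : yf z + dd l κ z ≠ 0 := hz
    by_cases hzl : z = l
    · rw [hzl]; exact ⟨hlA, hlv⟩
    · have h0 : dd l κ z = 0 := by rw [dd]; simp [hzl]
      have hz2 : yf z ≠ 0 := by omega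
      exact ⟨(Finset.mem_erase.mp (hfs z hz2).1).2, (hfs z hz2).2⟩
  · show ∑ z, (yf z + dd l κ z) = t
    rw [Finset.sum_add_distrib, hft, sum_dd]
    omega
  · show load par wt (fun z => yf z + dd l κ z) z ≤ d z
    rw [load_add]
    by_cases hzl : z = l
    · rw [hzl]
      have hfl0 : yf l = 0 := by
        by_contra h
        exact (Finset.mem_erase.mp (hfs l h).1).1 rfl
      have hnc : ∀ a, yf a ≠ 0 → par a ≠ l :=
        fun a ha => hleaf a (Finset.mem_erase.mp (hfs a ha).1).2 (hfs a ha).2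
      rw [load_eq_of_no_child par wt hnc, hfl0, Nat.mul_zero,
        load_dd, if_pos rfl, if_neg hlu]
      have h7 : wt l * κ + wt l = wt l * k := by rw [hkκ]; ring
      omega
    by_cases hzu : z = par l
    · rw [hzu]
      have h1 : load par wt yf (par l) ≤ d' (par l) := hfl (par l)
      rw [load_dd, if_neg (fun h : par l = l => hlu h), if_pos rfl]
      have h7 : wt l * κ = κ * wt l := Nat.mul_comm _ _
      omega
    · have h1 : load par wt yf z ≤ d' z := hfl z
      have h4 : d' z = d z := hd'z z hzu
      rw [load_dd, if_neg hzl, if_neg (fun h : par l = z => hzu h.symm)]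
      omega


variable (G : SimpleGraph (Fin n)) (ω : Fin n → Fin n → ℕ)

def S1 : Set (Fin n →₀ ℕ) :=
  {s | ∃ i j, G.Adj i j ∧ s = Finsupp.single i (ω i j) + Finsupp.single j (ω i j)}

def St (t : ℕ) : Set (Fin n →₀ ℕ) :=
  {s | ∃ m : Multiset (Fin n →₀ ℕ), (∀ a ∈ m, a ∈ S1 G ω) ∧ Multiset.card m = t ∧ m.sum = s}

variable {K : Type*} [Field K]

lemma pow_monomial (i j : Fin n) (w : ℕ) :
    ((X i * X j : MvPolynomial (Fin n) K)) ^ w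
      = monomial (Finsupp.single i w + Finsupp.single j w) (1 : K) := by
  rw [mul_pow, X_pow_eq_monomial, X_pow_eq_monomial, monomial_mul, one_mul]

lemma wei_eq_span :
    weightedEdgeIdeal n K G ω
      = Ideal.span ((fun s => monomial s (1 : K)) '' S1 G ω) := by
  unfold weightedEdgeIdeal
  congr 1
  ext f
  constructor
  · rintro ⟨i, j, hadj, rfl⟩
    exact ⟨Finsupp.single i (ω i j) + Finsupp.single j (ω i j), ⟨i, j, hadj, rfl⟩,
      (pow_monomial i j (ω i j)).symm⟩
  · rintro ⟨s, ⟨i, j, hadj, rfl⟩, rfl⟩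
    exact ⟨i, j, hadj, (pow_monomial i j (ω i j)).symm⟩

lemma pow_eq_span (t : ℕ) (ht : 1 ≤ t) :
    weightedEdgeIdeal n K G ω ^ t
      = Ideal.span ((fun s => monomial s (1 : K)) '' St G ω t) := by
  induction t, ht using Nat.le_induction with
  | base =>
    have hset : S1 G ω = St G ω 1 := by
      ext s
      constructor
      · intro hs
        exact ⟨({s} : Multiset (Fin n →₀ ℕ)), by simpa using hs, by simp, by simp⟩
      · rintro ⟨m, hm, hc, rfl⟩
        obtain ⟨a, rfl⟩ := Multiset.card_eq_one.mp hc
        simpa using hm a (by simp)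
    rw [pow_one, wei_eq_span, hset]
  | succ t ht ih =>
    rw [pow_succ, ih, wei_eq_span, Ideal.span_mul_span']
    congr 1
    ext x
    constructor
    · rintro ⟨a, ⟨s1, hs1, rfl⟩, b, ⟨s2, hs2, rfl⟩, rfl⟩
      obtain ⟨m, hm, hc, rfl⟩ := hs1
      refine ⟨m.sum + s2, ⟨s2 ::ₘ m, ?_, by simp [hc], by rw [Multiset.sum_cons]; exact add_comm _ _⟩, ?_⟩
      · intro a ha
        rcases Multiset.mem_cons.mp ha with h | h
        · rw [h]; exact hs2
        · exact hm a h
      · simp [monomial_mul]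
    · rintro ⟨s, ⟨m, hm, hc, rfl⟩, rfl⟩
      have hm0 : m ≠ 0 := by
        intro h
        rw [h] at hc
        simp at hc
      obtain ⟨a, ha⟩ := Multiset.exists_mem_of_ne_zero hm0
      have hme : a ::ₘ m.erase a = m := Multiset.cons_erase ha
      refine ⟨monomial ((m.erase a).sum) 1, ⟨(m.erase a).sum,
          ⟨m.erase a, fun b hb => hm b (Multiset.mem_of_mem_erase hb), ?_, rfl⟩, rfl⟩,
        monomial a 1, ⟨a, hm a ha, rfl⟩, ?_⟩
      · have : Multiset.card (a ::ₘ m.erase a) = t + 1 := by rw [hme]; exact hc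
        simpa using this
      · show monomial ((m.erase a).sum) (1:K) * monomial a 1 = monomial (m.sum) 1
        rw [monomial_mul, one_mul]
        conv_rhs => rw [← hme, Multiset.sum_cons]
        rw [add_comm]


lemma bridge {G : SimpleGraph (Fin n)} (hT : G.IsTree) (v : Fin n) :
    ∃ par : Fin n → Fin n, par v = v ∧
      (∀ x, x ≠ v → G.Adj x (par x)) ∧
      (∀ x, x ≠ v → G.dist (par x) v + 1 = G.dist x v) ∧
      (∀ i j, G.Adj i j → i = par j ∨ j = par i) := by
  classical
  have hconn : G.Connected := hT.isConnected
  have hpaths : ∀ x : Fin n, ∃ p : G.Walk x v, p.IsPath ∧ p.length = G.dist x v := by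
    intro x
    obtain ⟨q, hq⟩ := hconn.exists_walk_length_eq_dist x v
    refine ⟨q.bypass, q.bypass_isPath, le_antisymm ?_ (SimpleGraph.dist_le _)⟩
    calc q.bypass.length ≤ q.length := q.length_bypass_le
      _ = G.dist x v := hq
  choose pth hpthP hpthL using hpaths
  set par : Fin n → Fin n := fun x => (pth x).getVert 1 with hpar
  -- basic facts
  have hparv : par v = v := by
    rw [hpar]
    have h0 : (pth v).length = 0 := by rw [hpthL]; simp
    exact (pth v).getVert_of_length_le (by omega)
  have hadj : ∀ x, x ≠ v → G.Adj x (par x) := by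
    intro x hx
    have hd : 0 < G.dist x v := hconn.pos_dist_of_ne hx
    have h1 : 0 < (pth x).length := by rw [hpthL]; exact hd
    have := (pth x).adj_getVert_succ h1
    rwa [(pth x).getVert_zero] at this
  have hdist : ∀ x, x ≠ v → G.dist (par x) v + 1 = G.dist x v := by
    intro x hx
    obtain ⟨b, hb, q, hq⟩ := SimpleGraph.Walk.exists_eq_cons_of_ne hx (pth x)
    have hb1 : par x = b := by
      rw [hpar]
      simp only [hq, SimpleGraph.Walk.getVert_cons_succ]
      exact q.getVert_zero
    have hlen : q.length + 1 = G.dist x v := by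
      rw [← hpthL x, hq]
      simp [SimpleGraph.Walk.length_cons]
    have h1 : G.dist b v ≤ q.length := SimpleGraph.dist_le q
    have h2 : G.dist x v ≤ G.dist x b + G.dist b v := hconn.dist_triangle
    have h3 : G.dist x b = 1 := SimpleGraph.dist_eq_one_iff_adj.mpr hb
    rw [hb1]
    omega
  refine ⟨par, hparv, hadj, hdist, ?_⟩
  -- adjacent vertices differ in distance
  have hkey : ∀ i j : Fin n, G.Adj i j → G.dist j v + 1 = G.dist i v → j = par i := by
    intro i j hij hd
    have hiv : i ≠ v := by
      intro h
      rw [h] at hd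
      have hs : G.dist v v = 0 := SimpleGraph.dist_self
      omega
    -- the walk i → j → v is a path
    have hjns : i ∉ (pth j).support := by
      intro hmem
      have h1 : G.dist i v ≤ ((pth j).dropUntil i hmem).length :=
        SimpleGraph.dist_le _
      have h2 : ((pth j).dropUntil i hmem).length ≤ (pth j).length :=
        SimpleGraph.Walk.length_dropUntil_le _ hmem
      rw [hpthL] at h2
      omega
    have hP2 : (SimpleGraph.Walk.cons hij (pth j)).IsPath :=
      (SimpleGraph.Walk.cons_isPath_iff _ _).mpr ⟨hpthP j, hjns⟩
    have huniq := hT.existsUnique_path i v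
    have he : pth i = SimpleGraph.Walk.cons hij (pth j) :=
      (huniq.unique (hpthP i) hP2)
    rw [hpar]
    simp only [he, SimpleGraph.Walk.getVert_cons_succ]
    exact ((pth j).getVert_zero).symm
  -- adjacent vertices have different distances
  have hne : ∀ i j : Fin n, G.Adj i j → G.dist i v ≠ G.dist j v := by
    intro i j hij heq
    have hij' : i ≠ j := hij.ne
    by_cases hiv : i = v
    · rw [hiv] at heq
      have hs : G.dist v v = 0 := SimpleGraph.dist_self
      have hjvne : j ≠ v := fun h => hij' (hiv.trans h.symm)
      have := hconn.pos_dist_of_ne hjvne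
      omega
    have hjv : j ≠ v := by
      intro h
      rw [h] at heq
      have hs : G.dist v v = 0 := SimpleGraph.dist_self
      exact hiv (hconn.dist_eq_zero_iff.mp (by omega))
    -- j → i → v walk is a path of length dist j v + 1 ≠ dist j v
    have hins : j ∉ (pth i).support := by
      intro hmem
      have hsp := (pth i).take_spec hmem
      have hlen : ((pth i).takeUntil j hmem).length + ((pth i).dropUntil j hmem).length
          = (pth i).length := by
        rw [← SimpleGraph.Walk.length_append, hsp]
      have h1 : G.dist j v ≤ ((pth i).dropUntil j hmem).length := SimpleGraph.dist_le _
      have h2 : 0 < ((pth i).takeUntil j hmem).length := by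
        by_contra h
        push_neg at h
        have h0 : ((pth i).takeUntil j hmem).length = 0 := by omega
        have := SimpleGraph.Walk.eq_of_length_eq_zero h0
        exact hij' this
      rw [hpthL] at hlen
      omega
    have hP2 : (SimpleGraph.Walk.cons hij.symm (pth i)).IsPath :=
      (SimpleGraph.Walk.cons_isPath_iff _ _).mpr ⟨hpthP i, hins⟩
    have huniq := hT.existsUnique_path j v
    have he : pth j = SimpleGraph.Walk.cons hij.symm (pth i) :=
      huniq.unique (hpthP j) hP2
    have hlen : (pth j).length = (pth i).length + 1 := by
      rw [he]; simp
    rw [hpthL, hpthL] at hlen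
    omega
  intro i j hij
  have h3 : G.dist i j = 1 := SimpleGraph.dist_eq_one_iff_adj.mpr hij
  have h4 : G.dist j i = 1 := SimpleGraph.dist_eq_one_iff_adj.mpr hij.symm
  have t1 : G.dist i v ≤ G.dist i j + G.dist j v := hconn.dist_triangle
  have t2 : G.dist j v ≤ G.dist j i + G.dist i v := hconn.dist_triangle
  have hne' := hne i j hij
  by_cases h : G.dist i v + 1 = G.dist j v
  · exact Or.inl (hkey j i hij.symm h)
  · have : G.dist j v + 1 = G.dist i v := by omega
    exact Or.inr (hkey i j hij this)


lemma increasing_par {G : SimpleGraph (Fin n)} {ω : Fin n → Fin n → ℕ} {v : Fin n}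
    (hT : G.IsTree)
    (hinc : ∀ (p : ℕ → Fin n) (k : ℕ), IsSimplePathOn G p k → IsLeafVertex G (p 0) →
      p k = v → IsIncreasingPath ω p k)
    {par : Fin n → Fin n}
    (hparv : par v = v)
    (hadj : ∀ x, x ≠ v → G.Adj x (par x))
    (hdist : ∀ x, x ≠ v → G.dist (par x) v + 1 = G.dist x v)
    (hor : ∀ i j, G.Adj i j → i = par j ∨ j = par i) :
    ∀ x, x ≠ v → par x ≠ v → ω x (par x) ≤ ω (par x) (par (par x)) := by
  classical
  have hconn : G.Connected := hT.isConnected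
  have hdlt : ∀ x : Fin n, G.dist x v < n := by
    intro x
    obtain ⟨q, hq⟩ := hconn.exists_walk_length_eq_dist x v
    have h1 : q.bypass.length < Fintype.card (Fin n) := q.bypass_isPath.length_lt
    have h2 : G.dist x v ≤ q.bypass.length := SimpleGraph.dist_le _
    rw [Fintype.card_fin] at h1
    omega
  have hdesc : ∀ (N : ℕ) (x : Fin n), x ≠ v → n ≤ N + G.dist x v →
      ∃ (l : Fin n) (m : ℕ), par^[m] l = x ∧ (∀ y, G.Adj l y → y = par l) ∧ l ≠ v := by
    intro N
    induction N with
    | zero =>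
      intro x hx hn
      exact absurd (hdlt x) (by omega)
    | succ N ih =>
      intro x hx hn
      by_cases hlf : ∀ y, G.Adj x y → y = par x
      · exact ⟨x, 0, rfl, hlf, hx⟩
      · push_neg at hlf
        obtain ⟨c, hcadj, hcpar⟩ := hlf
        have hcx : x = par c := by
          rcases hor x c hcadj with h | h
          · exact h
          · exact absurd h hcpar
        have hcv : c ≠ v := by
          intro h
          rw [h, hparv] at hcx
          exact hx hcx
        have hdc : G.dist (par c) v + 1 = G.dist c v := hdist c hcv
        rw [← hcx] at hdc
        obtain ⟨l, m, hml, hlf', hlv⟩ := ih c hcv (by omega)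
        exact ⟨l, m + 1, by rw [Function.iterate_succ_apply', hml, ← hcx], hlf', hlv⟩
  intro x hx hpx
  have hd2 : 2 ≤ G.dist x v := by
    have h1 := hdist x hx
    have h2 : 1 ≤ G.dist (par x) v := hconn.pos_dist_of_ne hpx
    omega
  obtain ⟨l, m, hml, hlf, hlv⟩ := hdesc n x hx (by omega)
  set p : ℕ → Fin n := fun i => par^[i] l with hp
  have hml' : p m = x := hml
  set k := G.dist l v with hk
  have hC1 : ∀ i, i ≤ k → G.dist (p i) v = k - i := by
    intro i
    induction i with
    | zero => intro _; simp [hp, hk]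
    | succ i ih2 =>
      intro hik
      have h1 := ih2 (by omega)
      have hpv : p i ≠ v := by
        intro h
        rw [h] at h1
        have hs : G.dist v v = 0 := SimpleGraph.dist_self
        omega
      have h2 := hdist (p i) hpv
      have h3 : p (i + 1) = par (p i) := Function.iterate_succ_apply' par i l
      rw [h3]
      omega
  have hmk : m + 2 ≤ k := by
    by_cases h : m ≤ k
    · have h5 := hC1 m h
      rw [hml'] at h5
      omega
    · exfalso
      push_neg at h
      have hpk : p k = v := by
        have h5 := hC1 k (le_refl _)
        rw [Nat.sub_self] at h5
        exact hconn.dist_eq_zero_iff.mp h5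
      have hpi : ∀ i, p (k + i) = v := by
        intro i
        induction i with
        | zero => simpa using hpk
        | succ i ih3 =>
          have h6 : p (k + i + 1) = par (p (k + i)) := Function.iterate_succ_apply' par _ l
          rw [show k + (i+1) = k + i + 1 from rfl, h6, ih3, hparv]
      have h7 := hpi (m - k)
      rw [Nat.add_sub_cancel' (le_of_lt h), hml'] at h7
      exact hx h7
  have hsimple : IsSimplePathOn G p k := by
    constructor
    · intro i hi j hj hij
      have h1 := hC1 i hi
      have h2 := hC1 j hj
      rw [hij] at h1
      omega
    · intro i hik
      have h1 := hC1 i (by omega)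
      have hpv : p i ≠ v := by
        intro h
        rw [h] at h1
        have hs : G.dist v v = 0 := SimpleGraph.dist_self
        omega
      have h3 : p (i + 1) = par (p i) := Function.iterate_succ_apply' par i l
      rw [h3]
      exact hadj (p i) hpv
  have hleafv : IsLeafVertex G (p 0) := by
    have hp0 : p 0 = l := rfl
    rw [hp0]
    exact ⟨par l, hadj l hlv, fun y hy => hlf y hy⟩
  have hpk : p k = v := by
    have h5 := hC1 k (le_refl _)
    rw [Nat.sub_self] at h5
    exact hconn.dist_eq_zero_iff.mp h5
  have hstep := hinc p k hsimple hleafv hpk m hmk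
  have e2 : p (m + 1) = par x := by
    have : p (m + 1) = par (p m) := Function.iterate_succ_apply' par m l
    rw [this, hml']
  have e3 : p (m + 2) = par (par x) := by
    have : p (m + 2) = par (p (m + 1)) := Function.iterate_succ_apply' par (m+1) l
    rw [this, e2]
  rw [hml', e2, e3] at hstep
  exact hstep

section Translate

variable {G : SimpleGraph (Fin n)} {ω : Fin n → Fin n → ℕ} {v : Fin n} {par : Fin n → Fin n}

/-- the two `Finsupp.single`s of an edge evaluate like the load of a unit edge vector -/
lemma dd_load_eq_single (wt : Fin n → ℕ) (hwt : ∀ c, wt c = ω c (par c)) (c z : Fin n) :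
    load par wt (dd c 1) z
      = (Finsupp.single c (ω c (par c)) + Finsupp.single (par c) (ω c (par c))) z := by
  rw [load_dd, Finsupp.add_apply, Finsupp.single_apply, Finsupp.single_apply,
    Nat.mul_one, hwt]
  congr 1
  · by_cases h : z = c
    · simp [h]
    · simp [h, Ne.symm h]

lemma s1_form (hsym : ∀ a b, ω a b = ω b a) (hparv : par v = v)
    (hor : ∀ i j, G.Adj i j → i = par j ∨ j = par i) :
    ∀ s ∈ S1 G ω, ∃ c, c ≠ v ∧
      s = Finsupp.single c (ω c (par c)) + Finsupp.single (par c) (ω c (par c)) := by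
  rintro s ⟨i, j, hadj', rfl⟩
  rcases hor i j hadj' with h | h
  · -- i = par j
    refine ⟨j, ?_, ?_⟩
    · intro hj
      rw [hj, hparv] at h
      exact hadj'.ne (h.trans hj.symm)
    · rw [← h, hsym i j, add_comm]
  · -- j = par i
    refine ⟨i, ?_, ?_⟩
    · intro hi
      rw [hi, hparv] at h
      exact hadj'.ne (hi.trans h.symm)
    · rw [← h]

lemma y_of_multiset (wt : Fin n → ℕ) (hwt : ∀ c, wt c = ω c (par c))
    (hsym : ∀ a b, ω a b = ω b a) (hparv : par v = v)
    (hor : ∀ i j, G.Adj i j → i = par j ∨ j = par i) :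
    ∀ (m : Multiset (Fin n →₀ ℕ)), (∀ a ∈ m, a ∈ S1 G ω) →
    ∃ y : Fin n → ℕ, (∀ x, y x ≠ 0 → x ≠ v) ∧ (∑ x, y x) = Multiset.card m ∧
      ∀ z, load par wt y z = m.sum z := by
  intro m
  induction m using Multiset.induction_on with
  | empty =>
    intro _
    refine ⟨fun _ => 0, fun x hx => absurd rfl hx, by simp, fun z => ?_⟩
    simp [load]
  | cons a m ih =>
    intro hmem
    obtain ⟨y, hs, hsum, hload⟩ := ih (fun b hb => hmem b (Multiset.mem_cons_of_mem hb))
    obtain ⟨c, hcv, ha⟩ := s1_form hsym hparv hor a (hmem a (Multiset.mem_cons_self a m))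
    refine ⟨fun x => y x + dd c 1 x, ?_, ?_, fun z => ?_⟩
    · intro x hx
      have hx' : y x + dd c 1 x ≠ 0 := hx
      by_cases hxc : x = c
      · rw [hxc]; exact hcv
      · have h0 : dd c 1 x = 0 := by rw [dd, if_neg hxc]
        have hyx : y x ≠ 0 := by omega
        exact hs x hyx
    · rw [Finset.sum_add_distrib, hsum, sum_dd]
      simp
    · rw [load_add, hload, Multiset.sum_cons, Finsupp.add_apply,
        dd_load_eq_single wt hwt, ha]
      omega
  
lemma multiset_of_y (wt : Fin n → ℕ) (hwt : ∀ c, wt c = ω c (par c))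
    (hadj : ∀ x, x ≠ v → G.Adj x (par x)) :
    ∀ (t : ℕ) (y : Fin n → ℕ), (∀ x, y x ≠ 0 → x ≠ v) → (∑ x, y x) = t →
    ∃ m : Multiset (Fin n →₀ ℕ), (∀ a ∈ m, a ∈ S1 G ω) ∧ Multiset.card m = t ∧
      ∀ z, m.sum z = load par wt y z := by
  intro t
  induction t with
  | zero =>
    intro y hs hsum
    have hy : ∀ x, y x = 0 := by
      intro x
      by_contra h
      have h1 : 0 < y x := Nat.pos_of_ne_zero h
      have h2 : y x ≤ ∑ x, y x := Finset.single_le_sum (f := fun x => y x)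
        (fun i _ => Nat.zero_le _) (Finset.mem_univ x)
      omega
    refine ⟨0, by simp, by simp, fun z => ?_⟩
    have hl0 : load par wt y z = 0 := by
      unfold load
      rw [hy z, Nat.mul_zero, Finset.sum_eq_zero (fun x _ => by rw [hy x, Nat.mul_zero])]
      rfl
    rw [Multiset.sum_zero, hl0]
    exact Finsupp.zero_apply
  | succ t ih =>
    intro y hs hsum
    obtain ⟨x₀, hx₀⟩ := exists_ne_zero_of_sum_ne_zero (y := y) (by omega)
    have hx₀v : x₀ ≠ v := hs x₀ hx₀
    set y₁ := Function.update y x₀ (y x₀ - 1) with hy₁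
    have hs₁ : ∀ x, y₁ x ≠ 0 → x ≠ v := by
      intro x hx
      apply hs
      by_cases hxx : x = x₀
      · rw [hxx]; exact hx₀
      · rwa [hy₁, Function.update_of_ne hxx] at hx
    have hsum₁ : ∑ x, y₁ x = t := by
      have := sum_update_sub_one hx₀
      rw [← hy₁] at this
      omega
    obtain ⟨m, hmem, hcard, hmsum⟩ := ih y₁ hs₁ hsum₁
    refine ⟨(Finsupp.single x₀ (ω x₀ (par x₀))
        + Finsupp.single (par x₀) (ω x₀ (par x₀))) ::ₘ m,
      ?_, by simp [hcard], fun z => ?_⟩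
    · intro a ha
      rcases Multiset.mem_cons.mp ha with h | h
      · rw [h]
        exact ⟨x₀, par x₀, hadj x₀ hx₀v, rfl⟩
      · exact hmem a h
    · have hdecomp : y = fun x => y₁ x + dd x₀ 1 x := by
        rw [hy₁]
        exact eq_update_add_dd hx₀
      have h1 : load par wt y z = load par wt y₁ z + load par wt (dd x₀ 1) z := by
        conv_lhs => rw [hdecomp]
        exact load_add _ _ _
      rw [Multiset.sum_cons, Finsupp.add_apply, h1, hmsum z,
        dd_load_eq_single wt hwt]
      omega

end Translate
end WtAux

open WtAux in
/-- Lemma 2.2: if `G_ω` is an increasing weighted tree on the vertex set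
`{x_1, …, x_n}`, `n ≥ 2`, then the maximal graded ideal `𝔪 = (x_1, …, x_n)` is not an
associated prime of `I(G_ω)^t` for any `t ≥ 1`. -/
theorem maxIdeal_not_associated {n : ℕ} (hn : 2 ≤ n) (K : Type*) [Field K]
    (G : SimpleGraph (Fin n)) (ω : Fin n → Fin n → ℕ)
    (hsym : ∀ a b, ω a b = ω b a) (hpos : ∀ a b, G.Adj a b → 0 < ω a b)
    (v : Fin n) (hG : IsIncreasingWeightedTree G ω v)
    (t : ℕ) (ht : 1 ≤ t) :
    maxGradedIdeal n K ∉
      associatedPrimes (MvPolynomial (Fin n) K)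
        (MvPolynomial (Fin n) K ⧸ (weightedEdgeIdeal n K G ω ^ t)) := by
  classical
  intro hass
  obtain ⟨hprime, xq, hann⟩ := isAssociatedPrime_iff.mp hass
  obtain ⟨f, rfl⟩ := Ideal.Quotient.mk_surjective xq
  set J := weightedEdgeIdeal n K G ω ^ t with hJ
  -- f ∉ J
  have hfJ : f ∉ J := by
    intro hf
    apply hprime.ne_top
    rw [hann, Ideal.Quotient.eq_zero_iff_mem.mpr hf]
    ext r
    simp [Submodule.mem_colon_singleton]
  -- X i * f ∈ J for all i
  have hXf : ∀ i : Fin n, X i * f ∈ J := by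
    intro i
    have hXi : X i ∈ maxGradedIdeal n K := Ideal.subset_span ⟨i, rfl⟩
    rw [hann, Submodule.mem_colon_singleton, Submodule.mem_bot] at hXi
    have : Ideal.Quotient.mk J (X i * f) = 0 := by
      rw [map_mul]
      exact hXi
    exact Ideal.Quotient.eq_zero_iff_mem.mp this
  -- switch to monomial language
  rw [hJ, pow_eq_span G ω t ht] at hfJ
  rw [MvPolynomial.mem_ideal_span_monomial_image] at hfJ
  push_neg at hfJ
  obtain ⟨D, hDsupp, hD⟩ := hfJ
  have hXfm : ∀ i : Fin n, ∃ s ∈ St G ω t, s ≤ Finsupp.single i 1 + D := by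
    intro i
    have h1 := hXf i
    rw [hJ, pow_eq_span G ω t ht, MvPolynomial.mem_ideal_span_monomial_image] at h1
    apply h1
    rw [MvPolynomial.mem_support_iff, MvPolynomial.coeff_X_mul]
    exact MvPolynomial.mem_support_iff.mp hDsupp
  -- the tree structure
  obtain ⟨par, hparv, hadj, hdist, hor⟩ := bridge hG.1 v
  set wt : Fin n → ℕ := fun x => ω x (par x) with hwt
  have hwt_def : ∀ c, wt c = ω c (par c) := fun c => rfl
  have hincpar := increasing_par hG.1 hG.2 hparv hadj hdist hor
  -- hypothesis certificates
  have hyp : ∀ x ∈ (Finset.univ : Finset (Fin n)),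
      Cert par wt v Finset.univ t (fun z => D z + dd x 1 z) := by
    intro x _
    obtain ⟨s, ⟨m, hmem, hcard, hsum⟩, hle⟩ := hXfm x
    obtain ⟨y, hys, hysum, hyload⟩ := y_of_multiset wt hwt_def hsym hparv hor m hmem
    refine ⟨y, fun a ha => ⟨Finset.mem_univ a, hys a ha⟩, by rw [hysum, hcard], fun z => ?_⟩
    show load par wt y z ≤ D z + dd x 1 z
    have h1 : m.sum z ≤ Finsupp.single x 1 z + D z := by
      have h2 := Finsupp.le_def.mp hle z
      rw [Finsupp.add_apply] at h2
      rw [← hsum] at h2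
      exact h2
    rw [hyload z]
    rw [Finsupp.single_apply] at h1
    have h2 : (if x = z then 1 else 0 : ℕ) = dd x 1 z := by
      rw [dd]
      by_cases h : x = z
      · simp [h]
      · simp [h, Ne.symm h]
    omega
  -- apply the combinatorial theorem
  obtain ⟨y, hys, hysum, hyload⟩ :=
    star par wt (fun x => G.dist x v) v Finset.univ (Finset.mem_univ v)
      (fun x _ _ => Finset.mem_univ _)
      (fun x _ hxv => by show G.dist (par x) v < G.dist x v; have := hdist x hxv; omega)
      (fun x _ hxv hpxv => hincpar x hxv hpxv)
      (fun x _ hxv => hpos x (par x) (hadj x hxv))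
      t ht (fun z => D z) hyp
  -- convert back to a monomial divisor of D; contradiction
  obtain ⟨m, hmem, hcard, hmsum⟩ :=
    multiset_of_y wt hwt_def hadj t y (fun x hx => (hys x hx).2) hysum
  apply hD m.sum ⟨m, hmem, hcard, rfl⟩
  rw [Finsupp.le_def]
  intro z
  rw [hmsum z]
  exact hyload z
end
end

section
/- Let (G_ω, v) be an increasing weighted tree with vertex set {x_1,…,x_n}, let I(G_ω) ⊆ R = K[x_1,…,x_n] be its weighted edge ideal, and let m ≥ μ(v), where μ(v) = max{ω(vy) ∣ y ∈ N_G(v)}. Then Ass((v^m, I(G_ω))^t) ⊆ Ass((v^m, I(G_ω))^{t+1}) for all t ≥ 1. -/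
open SimpleGraph

noncomputable section

variable {V : Type*}

open MvPolynomial

set_option linter.unusedSectionVars false

/- ### Auxiliary graph-theoretic lemmas -/

namespace AssPowersAux

lemma getVert_injOn {G : SimpleGraph V} : ∀ {u w : V} {p : G.Walk u w}, p.IsPath →
    ∀ i ≤ p.length, ∀ j ≤ p.length, p.getVert i = p.getVert j → i = j := by
  intro u w p
  induction p with
  | nil => intro _ i hi j hj _; simp only [SimpleGraph.Walk.length_nil] at hi hj; omega
  | @cons a b c h q ih =>
    intro hp i hi j hj heq
    rw [SimpleGraph.Walk.cons_isPath_iff] at hp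
    have hnotmem : a ∉ q.support := hp.2
    simp only [SimpleGraph.Walk.length_cons] at hi hj
    match i, j with
    | 0, 0 => rfl
    | 0, (j+1) =>
      exfalso
      rw [SimpleGraph.Walk.getVert_zero, SimpleGraph.Walk.getVert_cons_succ] at heq
      exact hnotmem (SimpleGraph.Walk.mem_support_iff_exists_getVert.2 ⟨j, heq.symm, by omega⟩)
    | (i+1), 0 =>
      exfalso
      rw [SimpleGraph.Walk.getVert_zero, SimpleGraph.Walk.getVert_cons_succ] at heq
      exact hnotmem (SimpleGraph.Walk.mem_support_iff_exists_getVert.2 ⟨i, heq, by omega⟩)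
    | (i+1), (j+1) =>
      rw [SimpleGraph.Walk.getVert_cons_succ, SimpleGraph.Walk.getVert_cons_succ] at heq
      have := ih hp.1 i (by omega) j (by omega) heq
      omega

lemma increasing_mono {ω : V → V → ℕ} {p : ℕ → V} {k : ℕ} (h : IsIncreasingPath ω p k) :
    ∀ i j, i ≤ j → j + 1 ≤ k → ω (p i) (p (i + 1)) ≤ ω (p j) (p (j + 1)) := by
  intro i j
  induction j with
  | zero =>
    intro hij _
    have hi0 : i = 0 := by omega
    subst hi0
    exact le_refl _
  | succ j ihj =>
    intro hij hjk
    rcases Nat.eq_or_lt_of_le hij with rfl | hlt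
    · exact le_refl _
    · have h1 : ω (p i) (p (i+1)) ≤ ω (p j) (p (j+1)) := ihj (by omega) (by omega)
      have h2 : ω (p j) (p (j+1)) ≤ ω (p (j+1)) (p (j+2)) := h j (by omega)
      exact le_trans h1 h2

variable {n : ℕ} {G : SimpleGraph (Fin n)}

lemma start_not_mem_dropUntil_support [DecidableEq (Fin n)] {u w y : Fin n} {p : G.Walk u w}
    (hp : p.IsPath) (hy : y ∈ p.support) (hne : y ≠ u) : u ∉ (p.dropUntil y hy).support := by
  intro hmem
  have hspec := p.take_spec hy
  have hnodup : p.support.Nodup := hp.support_nodup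
  rw [← hspec, SimpleGraph.Walk.support_append, List.nodup_append] at hnodup
  have hu1 : u ∈ (p.takeUntil y hy).support := SimpleGraph.Walk.start_mem_support _
  have : (p.dropUntil y hy).support = y :: (p.dropUntil y hy).support.tail :=
    SimpleGraph.Walk.support_eq_cons _
  rw [this] at hmem
  rcases List.mem_cons.1 hmem with h1 | h2
  · exact hne h1.symm
  · exact hnodup.2.2 u hu1 u h2 rfl

lemma leaf_of_nbrs_in_support (hT : G.IsTree) [DecidableEq (Fin n)] {c v : Fin n}
    (P : G.Walk c v) (hp : P.IsPath) (hlen : 0 < P.length)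
    (hall : ∀ y, G.Adj c y → y ∈ P.support) : IsLeafVertex G c := by
  have hnil : ¬ P.Nil := by rw [SimpleGraph.Walk.not_nil_iff_lt_length]; exact hlen
  have hadj1 : G.Adj c (P.getVert 1) := SimpleGraph.Walk.adj_snd hnil
  refine ⟨P.getVert 1, hadj1, ?_⟩
  intro y hy
  have hymem : y ∈ P.support := hall y hy
  have hyne : y ≠ c := fun h => G.irrefl (h ▸ hy)
  have hdpath : (P.dropUntil y hymem).IsPath := hp.dropUntil hymem
  have hcnot : c ∉ (P.dropUntil y hymem).support :=
    start_not_mem_dropUntil_support hp hymem hyne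
  set Q : G.Walk c v := SimpleGraph.Walk.cons hy (P.dropUntil y hymem) with hQ
  have hQpath : Q.IsPath := by
    rw [hQ, SimpleGraph.Walk.cons_isPath_iff]; exact ⟨hdpath, hcnot⟩
  have huniq := hT.existsUnique_path c v
  obtain ⟨R0, -, hR0⟩ := huniq
  have hPQ : P = Q := (hR0 P hp).trans (hR0 Q hQpath).symm
  have : Q.getVert 1 = y := SimpleGraph.Walk.snd_cons _ hy
  rw [← hPQ] at this
  exact this.symm ▸ rfl

lemma exists_leaf_extension (hT : G.IsTree) [DecidableEq (Fin n)] (v : Fin n) :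
    ∀ (k : ℕ) (c : Fin n) (P : G.Walk c v), P.IsPath → 0 < P.length →
      n ≤ P.support.length + k →
    ∃ (ℓ : Fin n) (E : G.Walk ℓ c), (E.append P).IsPath ∧ IsLeafVertex G ℓ := by
  intro k
  induction k with
  | zero =>
    intro c P hp hlen hcard
    have hall : ∀ y, G.Adj c y → y ∈ P.support := by
      intro y _
      by_contra hnot
      have hnodup : (y :: P.support).Nodup := List.nodup_cons.2 ⟨hnot, hp.support_nodup⟩
      have := hnodup.length_le_card
      simp only [List.length_cons, Fintype.card_fin] at this
      omega
    exact ⟨c, SimpleGraph.Walk.nil, by rwa [SimpleGraph.Walk.nil_append],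
      leaf_of_nbrs_in_support hT P hp hlen hall⟩
  | succ k ih =>
    intro c P hp hlen hcard
    by_cases hex : ∃ y, G.Adj c y ∧ y ∉ P.support
    · obtain ⟨y, hcy, hynot⟩ := hex
      have hyc : G.Adj y c := hcy.symm
      set P' : G.Walk y v := SimpleGraph.Walk.cons hyc P with hP'
      have hP'path : P'.IsPath := by
        rw [hP', SimpleGraph.Walk.cons_isPath_iff]; exact ⟨hp, hynot⟩
      have hP'len : 0 < P'.length := by rw [hP', SimpleGraph.Walk.length_cons]; omega
      have hP'card : n ≤ P'.support.length + k := by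
        rw [hP', SimpleGraph.Walk.support_cons, List.length_cons]; omega
      obtain ⟨ℓ, E', hE'path, hleaf⟩ := ih y P' hP'path hP'len hP'card
      refine ⟨ℓ, E'.concat hyc, ?_, hleaf⟩
      rwa [SimpleGraph.Walk.concat_append]
    · push_neg at hex
      have hall : ∀ y, G.Adj c y → y ∈ P.support := fun y hy => hex y hy
      exact ⟨c, SimpleGraph.Walk.nil, by rwa [SimpleGraph.Walk.nil_append],
        leaf_of_nbrs_in_support hT P hp hlen hall⟩

/-- For every edge `(a,b)` of an increasing weighted tree, there is a leaf edge `(ℓ, y)`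
with `ℓ ≠ v` and weight at most `ω a b`. -/
lemma exists_leaf_edge_le [DecidableEq (Fin n)] {ω : Fin n → Fin n → ℕ} {v : Fin n}
    (hG : IsIncreasingWeightedTree G ω v) (hsym : ∀ a b, ω a b = ω b a)
    {a b : Fin n} (hab : G.Adj a b) :
    ∃ ℓ y, G.Adj ℓ y ∧ IsLeafVertex G ℓ ∧ ℓ ≠ v ∧ ω ℓ y ≤ ω a b := by
  obtain ⟨hT, hInc⟩ := hG
  -- build an initial path from `a` or `b` to `v` whose first edge is the edge `{a, b}`
  obtain ⟨W, hW, -⟩ := hT.existsUnique_path b v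
  have hinit : ∃ (c d : Fin n) (P : G.Walk c v), P.IsPath ∧ 0 < P.length ∧
      P.getVert 1 = d ∧ (ω c d = ω a b) := by
    by_cases ha : a ∈ W.support
    · have hne : a ≠ b := hab.ne
      have hdpath : (W.dropUntil a ha).IsPath := hW.dropUntil ha
      have hbnot : b ∉ (W.dropUntil a ha).support :=
        start_not_mem_dropUntil_support hW ha hne
      refine ⟨b, a, SimpleGraph.Walk.cons hab.symm (W.dropUntil a ha), ?_, ?_, ?_, hsym b a ▸ rfl⟩
      · rw [SimpleGraph.Walk.cons_isPath_iff]; exact ⟨hdpath, hbnot⟩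
      · rw [SimpleGraph.Walk.length_cons]; omega
      · exact SimpleGraph.Walk.snd_cons _ _
    · refine ⟨a, b, SimpleGraph.Walk.cons hab W, ?_, ?_, ?_, rfl⟩
      · rw [SimpleGraph.Walk.cons_isPath_iff]; exact ⟨hW, ha⟩
      · rw [SimpleGraph.Walk.length_cons]; omega
      · exact SimpleGraph.Walk.snd_cons _ _
  obtain ⟨c, d, P, hPpath, hPlen, hPd, hcd⟩ := hinit
  obtain ⟨ℓ, E, hFpath, hleaf⟩ := exists_leaf_extension hT v n c P hPpath hPlen (by omega)
  set F : G.Walk ℓ v := E.append P with hF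
  set p : ℕ → Fin n := fun i => F.getVert i with hpdef
  set kk : ℕ := F.length with hkk
  have hsimple : IsSimplePathOn G p kk := by
    constructor
    · intro i hi j hj heq
      exact getVert_injOn hFpath i hi j hj heq
    · intro i hi
      exact F.adj_getVert_succ hi
  have hp0 : p 0 = ℓ := F.getVert_zero
  have hpk : p kk = v := F.getVert_length
  have hleaf0 : IsLeafVertex G (p 0) := hp0 ▸ hleaf
  have hIncP : IsIncreasingPath ω p kk := hInc p kk hsimple hleaf0 hpk
  have hFlen : kk = E.length + P.length := SimpleGraph.Walk.length_append _ _
  set j : ℕ := E.length with hj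
  have hpj : p j = c := by
    rw [hpdef]
    simp only [hF, SimpleGraph.Walk.getVert_append]
    rw [if_neg (by omega)]
    rw [hj, Nat.sub_self, SimpleGraph.Walk.getVert_zero]
  have hpj1 : p (j + 1) = d := by
    rw [hpdef]
    simp only [hF, SimpleGraph.Walk.getVert_append]
    rw [if_neg (by omega)]
    have : j + 1 - E.length = 1 := by omega
    rw [this, hPd]
  have hkpos : 0 < kk := by omega
  have hmono : ω (p 0) (p 1) ≤ ω (p j) (p (j + 1)) :=
    increasing_mono hIncP 0 j (by omega) (by omega)
  refine ⟨p 0, p 1, hsimple.2 0 hkpos, hleaf0, ?_, ?_⟩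
  · intro h0
    have := hsimple.1 0 (by omega) kk (by omega) (h0.trans hpk.symm)
    omega
  · rw [hpj, hpj1, hcd] at hmono
    exact hmono

end AssPowersAux

namespace AssPowersAux2

variable {α : Type*} [DecidableEq α]

/-- Sums of `k` generators. -/
def SumSet (Gen : Set (α →₀ ℕ)) (k : ℕ) : Set (α →₀ ℕ) :=
  {d | ∃ L : Multiset (α →₀ ℕ), Multiset.card L = k ∧ (∀ x ∈ L, x ∈ Gen) ∧ L.sum = d}

lemma multiset_sum_apply (L : Multiset (α →₀ ℕ)) (x : α) :
    L.sum x = (L.map (fun g => g x)).sum := by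
  induction L using Multiset.induction with
  | empty => simp
  | cons a s ih => simp [Finsupp.add_apply, ih]

lemma span_pow_monomial {K : Type*} [Field K] (Gen : Set (α →₀ ℕ)) (k : ℕ) :
    (Ideal.span ((fun s => (monomial s (1 : K) : MvPolynomial α K)) '' Gen)) ^ k =
      Ideal.span ((fun s => (monomial s (1 : K) : MvPolynomial α K)) '' SumSet Gen k) := by
  induction k with
  | zero =>
    rw [pow_zero, Ideal.one_eq_top, eq_comm, Ideal.eq_top_iff_one]
    apply Ideal.subset_span
    refine ⟨0, ⟨0, by simp, by simp, by simp⟩, by simp⟩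
  | succ k ih =>
    rw [pow_succ, ih, Ideal.span_mul_span']
    congr 1
    ext f
    constructor
    · rintro ⟨x, ⟨s, ⟨L, hcard, hmem, hsum⟩, rfl⟩, y, ⟨g, hg, rfl⟩, rfl⟩
      refine ⟨s + g, ⟨g ::ₘ L, by simp [hcard], ?_, by simp [hsum, add_comm]⟩, ?_⟩
      · intro x hx
        rcases Multiset.mem_cons.1 hx with rfl | hx
        · exact hg
        · exact hmem x hx
      · simp [monomial_mul]
    · rintro ⟨d, ⟨L, hcard, hmem, hsum⟩, rfl⟩
      have hL0 : L ≠ 0 := by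
        intro h; rw [h] at hcard; simp at hcard
      obtain ⟨g, hgL⟩ := Multiset.exists_mem_of_ne_zero hL0
      have hLrec : g ::ₘ L.erase g = L := Multiset.cons_erase hgL
      have hcard' : Multiset.card (L.erase g) = k := by
        have := Multiset.card_erase_of_mem hgL
        rw [this, hcard]; rfl
      refine ⟨monomial (L.erase g).sum 1, ⟨(L.erase g).sum, ⟨L.erase g, hcard', ?_, rfl⟩, rfl⟩,
        monomial g 1, ⟨g, hmem g hgL, rfl⟩, ?_⟩
      · exact fun x hx => hmem x (Multiset.mem_of_mem_erase hx)
      · have hd : (L.erase g).sum + g = d := by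
          rw [add_comm, ← Multiset.sum_cons, hLrec, hsum]
        dsimp only
        rw [monomial_mul, mul_one, hd]

/-- The key combinatorial removal lemma. -/
lemma core_removal (Gen : Set (α →₀ ℕ)) (ℓ z : α) (hℓz : ℓ ≠ z) (w : ℕ)
    (hℓ : ∀ g ∈ Gen, g ≠ Finsupp.single ℓ w + Finsupp.single z w → g ℓ = 0)
    (hz : ∀ g ∈ Gen, g z ≠ 0 → w ≤ g z)
    (k : ℕ) (e s : α →₀ ℕ) (hs : s ∈ SumSet Gen (k + 1))
    (hle : s ≤ Finsupp.single ℓ w + Finsupp.single z w + e) :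
    ∃ s' ∈ SumSet Gen k, s' ≤ e := by
  set estar : α →₀ ℕ := Finsupp.single ℓ w + Finsupp.single z w with hestar
  obtain ⟨L, hcard, hmem, hsum⟩ := hs
  have hestarℓ : estar ℓ = w := by
    simp [hestar, Finsupp.add_apply, Finsupp.single_eq_same, Finsupp.single_eq_of_ne' (Ne.symm hℓz)]
  have hestarz : estar z = w := by
    simp [hestar, Finsupp.add_apply, Finsupp.single_eq_same, Finsupp.single_eq_of_ne' hℓz]
  have hestarother : ∀ x, x ≠ ℓ → x ≠ z → estar x = 0 := by
    intro x hx1 hx2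
    simp [hestar, Finsupp.add_apply, Finsupp.single_eq_of_ne' (Ne.symm hx1),
      Finsupp.single_eq_of_ne' (Ne.symm hx2)]
  by_cases hestarL : estar ∈ L
  · -- remove the copy of estar
    have hLrec : estar ::ₘ L.erase estar = L := Multiset.cons_erase hestarL
    have hcard' : Multiset.card (L.erase estar) = k := by
      have := Multiset.card_erase_of_mem hestarL
      rw [this, hcard]; rfl
    refine ⟨(L.erase estar).sum, ⟨L.erase estar, hcard',
      fun x hx => hmem x (Multiset.mem_of_mem_erase hx), rfl⟩, ?_⟩
    have hsum' : estar + (L.erase estar).sum = s := by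
      rw [← Multiset.sum_cons, hLrec, hsum]
    rw [← hsum'] at hle
    exact (add_le_add_iff_left estar).mp hle
  · -- no copy of estar: every generator in L vanishes at ℓ
    have hLℓ : ∀ g ∈ L, g ℓ = 0 := by
      intro g hg
      exact hℓ g (hmem g hg) (fun h => hestarL (h ▸ hg))
    have hsumℓ : s ℓ = 0 := by
      rw [← hsum, multiset_sum_apply]
      apply Multiset.sum_eq_zero
      intro x hx
      obtain ⟨g, hg, rfl⟩ := Multiset.mem_map.1 hx
      exact hLℓ g hg
    by_cases hzL : ∃ g ∈ L, g z ≠ 0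
    · obtain ⟨g, hgL, hgz⟩ := hzL
      have hwgz : w ≤ g z := hz g (hmem g hgL) hgz
      have hLrec : g ::ₘ L.erase g = L := Multiset.cons_erase hgL
      have hcard' : Multiset.card (L.erase g) = k := by
        have := Multiset.card_erase_of_mem hgL
        rw [this, hcard]; rfl
      set s' : α →₀ ℕ := (L.erase g).sum with hs'
      have hsum' : g + s' = s := by rw [hs', ← Multiset.sum_cons, hLrec, hsum]
      refine ⟨s', ⟨L.erase g, hcard',
        fun x hx => hmem x (Multiset.mem_of_mem_erase hx), rfl⟩, ?_⟩
      rw [Finsupp.le_def]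
      intro x
      have hx1 : g x + s' x = s x := by rw [← hsum']; simp [Finsupp.add_apply]
      have hx2 : s x ≤ estar x + e x := by
        have := Finsupp.le_def.1 hle x
        simpa [Finsupp.add_apply] using this
      by_cases hxℓ : x = ℓ
      · subst hxℓ
        have : s x = 0 := hsumℓ
        omega
      · by_cases hxz : x = z
        · subst hxz
          rw [hestarz] at hx2
          omega
        · rw [hestarother x hxℓ hxz] at hx2
          omega
    · push_neg at hzL
      -- all generators vanish at both ℓ and z; drop any one
      have hL0 : L ≠ 0 := by
        intro h; rw [h] at hcard; simp at hcard
      obtain ⟨g, hgL⟩ := Multiset.exists_mem_of_ne_zero hL0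
      have hLrec : g ::ₘ L.erase g = L := Multiset.cons_erase hgL
      have hcard' : Multiset.card (L.erase g) = k := by
        have := Multiset.card_erase_of_mem hgL
        rw [this, hcard]; rfl
      set s' : α →₀ ℕ := (L.erase g).sum with hs'
      have hsum' : g + s' = s := by rw [hs', ← Multiset.sum_cons, hLrec, hsum]
      have hsumz : s z = 0 := by
        rw [← hsum, multiset_sum_apply]
        apply Multiset.sum_eq_zero
        intro x hx
        obtain ⟨g', hg', rfl⟩ := Multiset.mem_map.1 hx
        exact hzL g' hg'
      refine ⟨s', ⟨L.erase g, hcard',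
        fun x hx => hmem x (Multiset.mem_of_mem_erase hx), rfl⟩, ?_⟩
      rw [Finsupp.le_def]
      intro x
      have hx1 : g x + s' x = s x := by rw [← hsum']; simp [Finsupp.add_apply]
      have hx2 : s x ≤ estar x + e x := by
        have := Finsupp.le_def.1 hle x
        simpa [Finsupp.add_apply] using this
      by_cases hxℓ : x = ℓ
      · subst hxℓ; have : s x = 0 := hsumℓ; omega
      · by_cases hxz : x = z
        · subst hxz; have : s x = 0 := hsumz; omega
        · rw [hestarother x hxℓ hxz] at hx2; omega

end AssPowersAux2

namespace AssPowersAux3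

lemma ass_quot_subset {R : Type*} [CommRing R] (p q : Ideal R) (c : R)
    (h1 : ∀ x ∈ p, c * x ∈ q) (h2 : ∀ f : R, c * f ∈ q → f ∈ p) :
    associatedPrimes R (R ⧸ p) ⊆ associatedPrimes R (R ⧸ q) := by
  refine associatedPrimes.subset_of_injective (f := Submodule.mapQ p q (LinearMap.mulLeft R c) h1) ?_
  intro x y hxy
  obtain ⟨x, rfl⟩ := Submodule.Quotient.mk_surjective _ x
  obtain ⟨y, rfl⟩ := Submodule.Quotient.mk_surjective _ y
  change (Submodule.Quotient.mk (c * x) : R ⧸ q) = Submodule.Quotient.mk (c * y) at hxy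
  rw [Submodule.Quotient.eq] at hxy ⊢
  exact h2 _ (by simpa [mul_sub] using hxy)

end AssPowersAux3

/-- Lemma 2.4: if `(G_ω, v)` is an increasing weighted tree and
`m ≥ μ(v)`, then `Ass((v^m, I(G_ω))^t) ⊆ Ass((v^m, I(G_ω))^{t+1})` for all `t ≥ 1`. -/
theorem ass_powers_increasing {n : ℕ} (K : Type*) [Field K]
    (G : SimpleGraph (Fin n)) (ω : Fin n → Fin n → ℕ)
    (hsym : ∀ a b, ω a b = ω b a) (hpos : ∀ a b, G.Adj a b → 0 < ω a b)
    (v : Fin n) (hG : IsIncreasingWeightedTree G ω v)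
    (m : ℕ) (hm : muWt G ω v ≤ m)
    (t : ℕ) (ht : 1 ≤ t) :
    associatedPrimes (MvPolynomial (Fin n) K)
      (MvPolynomial (Fin n) K ⧸
        ((Ideal.span {(X v : MvPolynomial (Fin n) K) ^ m} ⊔ weightedEdgeIdeal n K G ω) ^ t)) ⊆
    associatedPrimes (MvPolynomial (Fin n) K)
      (MvPolynomial (Fin n) K ⧸
        ((Ideal.span {(X v : MvPolynomial (Fin n) K) ^ m} ⊔ weightedEdgeIdeal n K G ω) ^ (t + 1))) := by
  classical
  set I : Ideal (MvPolynomial (Fin n) K) :=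
    Ideal.span {(X v : MvPolynomial (Fin n) K) ^ m} ⊔ weightedEdgeIdeal n K G ω with hI
  have h1 : ∀ c ∈ I, ∀ x ∈ I ^ t, c * x ∈ I ^ (t + 1) := by
    intro c hc x hx
    have hx' : x * c ∈ I ^ t * I := Ideal.mul_mem_mul hx hc
    rwa [← pow_succ, mul_comm x c] at hx'
  by_cases hedge : ∃ a b : Fin n, G.Adj a b
  · -- main case: the graph has an edge
    obtain ⟨a, b, hab⟩ := hedge
    -- choose a minimal-weight leaf edge (ℓ, z) with ℓ ≠ v
    set S : Set ℕ :=
      {w | ∃ ℓ y, G.Adj ℓ y ∧ IsLeafVertex G ℓ ∧ ℓ ≠ v ∧ w = ω ℓ y} with hS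
    have hSne : S.Nonempty := by
      obtain ⟨ℓ, y, h1', h2', h3', _⟩ := AssPowersAux.exists_leaf_edge_le hG hsym hab
      exact ⟨ω ℓ y, ℓ, y, h1', h2', h3', rfl⟩
    obtain ⟨ℓ, z, hadj, hleaf, hℓv, hwstar⟩ := Nat.sInf_mem hSne
    have hmin : ∀ a' b', G.Adj a' b' → ω ℓ z ≤ ω a' b' := by
      intro a' b' h
      obtain ⟨ℓ', y', h1', h2', h3', h4'⟩ := AssPowersAux.exists_leaf_edge_le hG hsym h
      have : sInf S ≤ ω ℓ' y' := Nat.sInf_le ⟨ℓ', y', h1', h2', h3', rfl⟩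
      omega
    have hlz : ℓ ≠ z := hadj.ne
    have hleaf' : ∀ y, G.Adj ℓ y → y = z := by
      obtain ⟨u, hu, huniq⟩ := hleaf
      intro y hy
      exact (huniq y hy).trans (huniq z hadj).symm
    -- w* ≤ m
    have hwm : ω ℓ z ≤ m := by
      obtain ⟨u0, hu0⟩ : ∃ u0 : Fin n, u0 ≠ v := by
        by_cases hav : a = v
        · exact ⟨b, fun hh => hab.ne (hav.trans hh.symm)⟩
        · exact ⟨a, hav⟩
      obtain ⟨P, hP, -⟩ := hG.1.existsUnique_path v u0
      have hnil : ¬ P.Nil := SimpleGraph.Walk.not_nil_of_ne (Ne.symm hu0)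
      have hvy0 : G.Adj v (P.getVert 1) := SimpleGraph.Walk.adj_snd hnil
      have hbdd : BddAbove {w | ∃ y, G.Adj v y ∧ w = ω v y} := by
        apply Set.Finite.bddAbove
        apply Set.Finite.subset (Set.finite_range (ω v))
        rintro w ⟨y, -, rfl⟩
        exact ⟨y, rfl⟩
      have hmu : ω v (P.getVert 1) ≤ muWt G ω v := by
        show ω v (P.getVert 1) ≤ sSup {w | ∃ y, G.Adj v y ∧ w = ω v y}
        exact le_csSup hbdd ⟨P.getVert 1, hvy0, rfl⟩
      exact (hmin v (P.getVert 1) hvy0).trans (hmu.trans hm)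
    -- the monomial generator set
    set Gen : Set (Fin n →₀ ℕ) := insert (Finsupp.single v m)
      {d | ∃ i j, G.Adj i j ∧ d = Finsupp.single i (ω i j) + Finsupp.single j (ω i j)}
      with hGen
    have hedge_eq : ∀ (i j : Fin n),
        ((X i : MvPolynomial (Fin n) K) * X j) ^ ω i j =
          monomial (Finsupp.single i (ω i j) + Finsupp.single j (ω i j)) 1 := by
      intro i j
      rw [mul_pow, X_pow_eq_monomial, X_pow_eq_monomial, monomial_mul, one_mul]
    have hJ : I = Ideal.span ((fun s => (monomial s (1 : K) : MvPolynomial (Fin n) K)) '' Gen) := by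
      rw [hI, weightedEdgeIdeal, ← Ideal.span_union]
      congr 1
      ext f
      simp only [Set.union_singleton, Set.mem_insert_iff, Set.mem_setOf_eq, Set.mem_image,
        hGen, Set.mem_insert_iff]
      constructor
      · rintro (rfl | ⟨i, j, hij, rfl⟩)
        · exact ⟨Finsupp.single v m, Or.inl rfl, X_pow_eq_monomial.symm⟩
        · exact ⟨_, Or.inr ⟨i, j, hij, rfl⟩, (hedge_eq i j).symm⟩
      · rintro ⟨s, (rfl | ⟨i, j, hij, rfl⟩), rfl⟩
        · exact Or.inl X_pow_eq_monomial.symm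
        · exact Or.inr ⟨i, j, hij, (hedge_eq i j).symm⟩
    set estar : Fin n →₀ ℕ :=
      Finsupp.single ℓ (ω ℓ z) + Finsupp.single z (ω ℓ z) with hestar
    set c : MvPolynomial (Fin n) K := monomial estar 1 with hc
    have hcI : c ∈ I := by
      rw [hI]
      apply Ideal.mem_sup_right
      apply Ideal.subset_span
      exact ⟨ℓ, z, hadj, by rw [hedge_eq ℓ z, hc, hestar]⟩
    -- generator coordinate facts
    have hgℓ : ∀ g ∈ Gen, g ≠ estar → g ℓ = 0 := by
      intro g hg hne
      rcases Set.mem_insert_iff.1 hg with rfl | ⟨i, j, hij, rfl⟩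
      · exact Finsupp.single_eq_of_ne' (Ne.symm hℓv)
      · by_cases hiℓ : i = ℓ
        · exfalso
          apply hne
          have hjz : j = z := hleaf' j (hiℓ ▸ hij)
          rw [hiℓ, hjz, hestar]
        · by_cases hjℓ : j = ℓ
          · exfalso
            apply hne
            have hiz : i = z := hleaf' i (G.adj_symm (hjℓ ▸ hij))
            rw [hiz, hjℓ, hsym z ℓ, hestar]
            exact add_comm _ _
          · rw [Finsupp.add_apply, Finsupp.single_eq_of_ne' hiℓ,
              Finsupp.single_eq_of_ne' hjℓ]
            rfl
    have hgz : ∀ g ∈ Gen, g z ≠ 0 → ω ℓ z ≤ g z := by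
      intro g hg hgz0
      rcases Set.mem_insert_iff.1 hg with rfl | ⟨i, j, hij, rfl⟩
      · by_cases hvz : v = z
        · have hzv : (Finsupp.single v m) z = m := by
            rw [hvz, Finsupp.single_eq_same]
          rw [hzv]
          exact hwm
        · exact absurd (Finsupp.single_eq_of_ne' hvz) hgz0
      · by_cases hiz : i = z
        · have hij' : G.Adj z j := hiz ▸ hij
          have hjz' : j ≠ z := hij'.ne.symm
          rw [hiz, Finsupp.add_apply, Finsupp.single_eq_same,
            Finsupp.single_eq_of_ne' hjz', add_zero]
          exact hmin z j hij'
        · by_cases hjz : j = z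
          · have hij' : G.Adj i z := hjz ▸ hij
            have hiz' : i ≠ z := hij'.ne
            rw [hjz, Finsupp.add_apply, Finsupp.single_eq_same,
              Finsupp.single_eq_of_ne' hiz', zero_add]
            exact hmin i z hij'
          · exfalso
            apply hgz0
            rw [Finsupp.add_apply, Finsupp.single_eq_of_ne' hiz,
              Finsupp.single_eq_of_ne' hjz]
            rfl
    -- the colon property
    have hcol : ∀ f, c * f ∈ I ^ (t + 1) → f ∈ I ^ t := by
      intro f hf
      rw [hJ, AssPowersAux2.span_pow_monomial, mem_ideal_span_monomial_image] at hf ⊢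
      intro d hd
      have hcoeff : coeff (estar + d) (c * f) = coeff d f := by
        rw [hc]
        simpa using coeff_monomial_mul d estar (1 : K) f
      have hdmem : estar + d ∈ (c * f).support := by
        rw [mem_support_iff, hcoeff]
        exact mem_support_iff.1 hd
      obtain ⟨s, hs, hsle⟩ := hf _ hdmem
      obtain ⟨s', hs', hs'le⟩ :=
        AssPowersAux2.core_removal Gen ℓ z hlz (ω ℓ z) hgℓ hgz t d s hs (by
          rw [← hestar]; exact hsle)
      exact ⟨s', hs', hs'le⟩
    exact AssPowersAux3.ass_quot_subset _ _ c (h1 c hcI) hcol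
  · -- degenerate case: no edges
    have hWE : weightedEdgeIdeal n K G ω = ⊥ := by
      rw [weightedEdgeIdeal]
      convert Ideal.span_empty
      ext f
      simp only [Set.mem_setOf_eq, Set.mem_empty_iff_false, iff_false]
      rintro ⟨i, j, hij, -⟩
      exact hedge ⟨i, j, hij⟩
    have hI' : I = Ideal.span {(X v : MvPolynomial (Fin n) K) ^ m} := by
      rw [hI, hWE, sup_bot_eq]
    have hcI : (X v : MvPolynomial (Fin n) K) ^ m ∈ I := by
      rw [hI']
      exact Ideal.subset_span rfl
    apply AssPowersAux3.ass_quot_subset _ _ ((X v : MvPolynomial (Fin n) K) ^ m)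
      (h1 _ hcI)
    intro f hf
    rw [hI', Ideal.span_singleton_pow, Ideal.mem_span_singleton] at hf ⊢
    obtain ⟨g, hg⟩ := hf
    refine ⟨g, ?_⟩
    have hX0 : (X v : MvPolynomial (Fin n) K) ^ m ≠ 0 :=
      pow_ne_zero _ (X_ne_zero v)
    apply mul_left_cancel₀ hX0
    rw [hg]
    ring
  done
end
end

section
/- Let (G_ω, v) be a weighted star graph with center v and vertex set {x_1,…,x_n}, let I(G_ω) ⊆ R = K[x_1,…,x_n] be its weighted edge ideal, and let m > μ(v), where μ(v) = max{ω(vy) ∣ y ∈ N_G(v)}. Then the maximal graded ideal 𝔪 = (x_1,…,x_n) is an associated prime of the ideal (v^m, I(G_ω)). -/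
open SimpleGraph

noncomputable section

variable {V : Type*}

open MvPolynomial

/-- Lemma 2.5: if `(G_ω, v)` is a weighted star graph with center `v`
and `m > μ(v)`, then `𝔪 = (x_1, …, x_n)` is an associated prime of `(v^m, I(G_ω))`. -/
theorem maxIdeal_associated_star {n : ℕ} (K : Type*) [Field K]
    (G : SimpleGraph (Fin n)) (ω : Fin n → Fin n → ℕ)
    (hsym : ∀ a b, ω a b = ω b a) (hpos : ∀ a b, G.Adj a b → 0 < ω a b)
    (v : Fin n) (hG : IsStarWithCenter G v)
    (m : ℕ) (hm : muWt G ω v < m) :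
    maxGradedIdeal n K ∈
      associatedPrimes (MvPolynomial (Fin n) K)
        (MvPolynomial (Fin n) K ⧸
          (Ideal.span {(X v : MvPolynomial (Fin n) K) ^ m} ⊔ weightedEdgeIdeal n K G ω)) := by
  classical
  obtain ⟨htree, hstar⟩ := hG
  set R := MvPolynomial (Fin n) K
  set J : Ideal R := Ideal.span {(X v : R) ^ m} ⊔ weightedEdgeIdeal n K G ω with hJdef
  -- every vertex other than v is adjacent to v
  have hadj : ∀ i : Fin n, i ≠ v → G.Adj v i := by
    intro i hi
    obtain ⟨w⟩ := htree.isConnected.preconnected i v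
    cases w with
    | nil => exact absurd rfl hi
    | @cons _ b _ h p =>
      rcases hstar _ _ h with h1 | h2
      · exact absurd h1 hi
      · exact (h2 ▸ h).symm
  have hμ : ∀ y, G.Adj v y → ω v y ≤ muWt G ω v := by
    intro y hy
    refine le_csSup ⟨Finset.univ.sup (ω v), ?_⟩ ⟨y, hy, rfl⟩
    rintro w ⟨z, _, rfl⟩
    exact Finset.le_sup (Finset.mem_univ z)
  have hm1 : 1 ≤ m := lt_of_le_of_lt (Nat.zero_le _) hm
  -- the exponent vector of the witness monomial
  set dfun : Fin n → ℕ := fun i => if i = v then m - 1 else ω v i - 1 with hdfun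
  set d : Fin n →₀ ℕ := Finsupp.equivFunOnFinite.symm dfun with hd
  have hdapp : ∀ i, d i = dfun i := fun i => rfl
  have hdv : d v = m - 1 := by rw [hdapp]; simp [hdfun]
  have hdo : ∀ i, i ≠ v → d i = ω v i - 1 := by
    intro i hi
    rw [hdapp]
    simp [hdfun, hi]
  set f : R := monomial d (1 : K) with hf
  have hfsupp : f.support = {d} := by
    rw [hf, support_monomial, if_neg one_ne_zero]
  -- the generators of J as monomials
  set S : Set (Fin n →₀ ℕ) := insert (Finsupp.single v m)
      {e | ∃ i j, G.Adj i j ∧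
        e = Finsupp.single i (ω i j) + Finsupp.single j (ω i j)} with hS
  have hXX : ∀ (i j : Fin n) (w : ℕ), ((X i * X j : R)) ^ w
      = monomial (Finsupp.single i w + Finsupp.single j w) (1 : K) := by
    intro i j w
    rw [mul_pow, X_pow_eq_monomial, X_pow_eq_monomial, monomial_mul, one_mul]
  have hJ : J = Ideal.span ((fun s => monomial s (1 : K)) '' S) := by
    rw [hJdef, weightedEdgeIdeal, ← Ideal.span_union]
    congr 1
    rw [hS, Set.image_insert_eq, ← X_pow_eq_monomial, ← Set.singleton_union]
    congr 1
    ext g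
    constructor
    · rintro ⟨i, j, hij, rfl⟩
      exact ⟨_, ⟨i, j, hij, rfl⟩, (hXX i j _).symm⟩
    · rintro ⟨e, ⟨i, j, hij, rfl⟩, rfl⟩
      exact ⟨i, j, hij, (hXX i j _).symm⟩
  have hmem : ∀ g : R, g ∈ J ↔ ∀ xi ∈ g.support, ∃ si ∈ S, si ≤ xi := by
    intro g
    rw [hJ]
    exact mem_ideal_span_monomial_image
  -- the witness is not in J
  have hfJ : f ∉ J := by
    intro h
    obtain ⟨si, hsi, hle⟩ := (hmem f).1 h d (by rw [hfsupp]; exact Finset.mem_singleton_self d)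
    rw [Finsupp.le_def] at hle
    rcases hsi with rfl | ⟨i, j, hij, rfl⟩
    · have := hle v
      rw [Finsupp.single_eq_same, hdv] at this
      omega
    · have hw := hpos i j hij
      rcases hstar i j hij with rfl | rfl
      · have hjv : j ≠ i := hij.ne'
        have := hle j
        rw [Finsupp.add_apply, Finsupp.single_eq_of_ne' (Ne.symm hjv),
          Finsupp.single_eq_same, hdo j hjv] at this
        omega
      · have hiv : i ≠ j := hij.ne
        have := hle i
        rw [Finsupp.add_apply, Finsupp.single_eq_same,
          Finsupp.single_eq_of_ne' (Ne.symm hiv), hdo i hiv, hsym j i] at this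
        omega
  -- each variable multiplies the witness into J
  have hXf : ∀ k : Fin n, (X k : R) * f ∈ J := by
    intro k
    have hx : (X k : R) * f = monomial (Finsupp.single k 1 + d) (1 : K) := by
      rw [hf, ← pow_one (X k : R), X_pow_eq_monomial, monomial_mul, one_mul]
    rw [hmem]
    intro xi hxi
    rw [hx, support_monomial, if_neg one_ne_zero, Finset.mem_singleton] at hxi
    subst hxi
    rcases eq_or_ne k v with rfl | hk
    · refine ⟨Finsupp.single k m, Set.mem_insert _ _, ?_⟩
      rw [Finsupp.le_def]
      intro s
      rcases eq_or_ne s k with rfl | hs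
      · rw [Finsupp.single_eq_same, Finsupp.add_apply, Finsupp.single_eq_same, hdv]
        omega
      · rw [Finsupp.single_eq_of_ne' (Ne.symm hs)]
        exact Nat.zero_le _
    · have ha := hadj k hk
      refine ⟨Finsupp.single v (ω v k) + Finsupp.single k (ω v k),
        Set.mem_insert_of_mem _ ⟨v, k, ha, rfl⟩, ?_⟩
      have hwk : ω v k ≤ m - 1 := by
        have := hμ k ha
        omega
      have hwp := hpos v k ha
      rw [Finsupp.le_def]
      intro s
      rw [Finsupp.add_apply, Finsupp.add_apply]
      rcases eq_or_ne s v with rfl | hsv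
      · rw [Finsupp.single_eq_same, Finsupp.single_eq_of_ne' hk,
          Finsupp.single_eq_of_ne' hk, hdv]
        omega
      · rcases eq_or_ne s k with rfl | hsk
        · rw [Finsupp.single_eq_same, Finsupp.single_eq_same,
            Finsupp.single_eq_of_ne' (Ne.symm hsv), hdo s hsv]
          omega
        · rw [Finsupp.single_eq_of_ne' (Ne.symm hsv), Finsupp.single_eq_of_ne' (Ne.symm hsk),
            Finsupp.single_eq_of_ne' (Ne.symm hsk)]
          exact Nat.zero_le _
  -- the maximal graded ideal is maximal
  have hker : maxGradedIdeal n K = RingHom.ker (constantCoeff : R →+* K) := by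
    apply le_antisymm
    · rw [maxGradedIdeal, Ideal.span_le]
      rintro _ ⟨i, rfl⟩
      simp [RingHom.mem_ker]
    · intro p hp
      rw [RingHom.mem_ker] at hp
      rw [maxGradedIdeal, ← Set.image_univ, mem_ideal_span_X_image]
      intro mo hmo
      have h0 : mo ≠ 0 := by
        rintro rfl
        rw [mem_support_iff] at hmo
        exact hmo (by simpa [constantCoeff_eq] using hp)
      obtain ⟨i, hi⟩ := Finsupp.ne_iff.1 h0
      exact ⟨i, Set.mem_univ i, by simpa using hi⟩
  have hmax : (maxGradedIdeal n K).IsMaximal := by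
    rw [hker]
    exact RingHom.ker_isMaximal_of_surjective _ (fun r => ⟨C r, constantCoeff_C _ r⟩)
  -- assemble
  refine (isAssociatedPrime_iff).2 ⟨hmax.isPrime, Ideal.Quotient.mk J f, ?_⟩
  have hann : ∀ r : R, r ∈ Submodule.colon (⊥ : Submodule R (R ⧸ J)) {Ideal.Quotient.mk J f} ↔
      r * f ∈ J := by
    intro r
    rw [Submodule.mem_colon_singleton, Submodule.mem_bot,
      show r • (Ideal.Quotient.mk J f) = Ideal.Quotient.mk J (r * f) from rfl,
      Ideal.Quotient.eq_zero_iff_mem]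
  refine hmax.eq_of_le ?_ ?_
  · intro htop
    exact hfJ (by simpa using (hann 1).1 (by rw [htop]; exact Submodule.mem_top))
  · rw [maxGradedIdeal, Ideal.span_le]
    rintro _ ⟨k, rfl⟩
    exact (hann _).2 (hXf k)
end
end
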